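/- arXiv:1708.06691 — 2 statements merged into one kernel-verified Lean document; each statement's English description precedes it below -/
import Mathlib

section
/- For every in-semicomplete digraph D and every positive integer k, π_k(D) ≤ α_k(D) (Linial's Conjecture holds for in-semicomplete digraphs). -/
open scoped Classical

namespace DigraphPaper

variable {V : Type*} [Fintype V] [DecidableEq V]

/-- Vertices `u` and `v` are adjacent in the digraph with arc relation `A`. -/
def DAdj (A : V → V → Prop) (u v : V) : Prop := A u v ∨ A v u

/-- A set of vertices is stable if its vertices are pairwise nonadjacent. -/
def DStable (A : V → V → Prop) (S : Set V) : Prop :=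
  ∀ u ∈ S, ∀ v ∈ S, u ≠ v → ¬ DAdj A u v

/-- The in-neighborhood of every vertex induces a semicomplete digraph. -/
def InSemicomplete (A : V → V → Prop) : Prop :=
  ∀ v u w : V, A u v → A w v → u ≠ w → DAdj A u w

/-- The out-neighborhood of every vertex induces a semicomplete digraph. -/
def OutSemicomplete (A : V → V → Prop) : Prop :=
  ∀ v u w : V, A v u → A v w → u ≠ w → DAdj A u w

/-- A path: a nonempty list of distinct vertices with consecutive arcs. -/
def IsPath (A : V → V → Prop) (p : List V) : Prop :=
  p ≠ [] ∧ p.Nodup ∧ p.Chain' A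

/-- A collection of pairwise vertex-disjoint lists. -/
def PDisjoint (P : Finset (List V)) : Prop :=
  ∀ p ∈ P, ∀ q ∈ P, p ≠ q → ∀ x : V, x ∈ p → x ∉ q

/-- A path partition: vertex-disjoint paths covering all vertices. -/
def IsPathPartition (A : V → V → Prop) (P : Finset (List V)) : Prop :=
  (∀ p ∈ P, IsPath A p) ∧ PDisjoint P ∧ ∀ v : V, ∃ p ∈ P, v ∈ p

/-- The k-norm of a collection of paths. -/
def knorm (k : ℕ) (P : Finset (List V)) : ℕ := ∑ p ∈ P, min p.length k

/-- The set of final vertices of the paths in `P`. -/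
def pends (P : Finset (List V)) : Set V := {x | ∃ p ∈ P, p.getLast? = some x}

/-- A partial k-coloring: k pairwise disjoint stable sets. -/
def IsPartialKColoring (A : V → V → Prop) (k : ℕ) (C : Fin k → Finset V) : Prop :=
  (∀ i, DStable A (C i : Set V)) ∧ ∀ i j, i ≠ j → Disjoint (C i) (C j)

/-- Orthogonality of a partial k-coloring to a path partition:
each path meets `min |P| k` distinct color classes. -/
def OrthoPC (k : ℕ) (C : Fin k → Finset V) (P : Finset (List V)) : Prop :=
  ∀ p ∈ P, min p.length k ≤ (Finset.univ.filter fun i : Fin k => ∃ x ∈ p, x ∈ C i).card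

/-- A k-optimal path partition. -/
def KOptimal (A : V → V → Prop) (k : ℕ) (P : Finset (List V)) : Prop :=
  IsPathPartition A P ∧
    ∀ Q : Finset (List V), IsPathPartition A Q → knorm k P ≤ knorm k Q

/-- A k-pack: at most k vertex-disjoint paths. -/
def IsKPack (A : V → V → Prop) (k : ℕ) (P : Finset (List V)) : Prop :=
  P.card ≤ k ∧ (∀ p ∈ P, IsPath A p) ∧ PDisjoint P

/-- Weight of a k-pack: number of covered vertices. -/
def weight (P : Finset (List V)) : ℕ := ∑ p ∈ P, p.length

/-- The set of vertices covered by the paths of `P`. -/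
def cover (P : Finset (List V)) : Finset V := P.biUnion List.toFinset

/-- An optimal k-pack. -/
def OptimalKPack (A : V → V → Prop) (k : ℕ) (P : Finset (List V)) : Prop :=
  IsKPack A k P ∧ ∀ Q : Finset (List V), IsKPack A k Q → weight Q ≤ weight P

/-- A coloring: a partition of the vertex set into stable sets. -/
def IsColoring (A : V → V → Prop) (C : Finset (Finset V)) : Prop :=
  (∀ c ∈ C, DStable A (c : Set V)) ∧ (∀ c ∈ C, c.Nonempty) ∧
  (∀ c ∈ C, ∀ c' ∈ C, c ≠ c' → Disjoint c c') ∧ ∀ v : V, ∃ c ∈ C, v ∈ c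

/-- Orthogonality of a coloring to a k-pack:
each color class meets `min |C| k` distinct paths. -/
def OrthoCP (k : ℕ) (C : Finset (Finset V)) (P : Finset (List V)) : Prop :=
  ∀ c ∈ C, min c.card k ≤ (P.filter fun p => ∃ x ∈ c, x ∈ p).card

/-- π_k(D): minimum k-norm of a path partition. -/
noncomputable def pik (A : V → V → Prop) (k : ℕ) : ℕ :=
  sInf {n | ∃ P : Finset (List V), IsPathPartition A P ∧ knorm k P = n}

/-- α_k(D): maximum weight of a partial k-coloring. -/
noncomputable def alphak (A : V → V → Prop) (k : ℕ) : ℕ :=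
  sSup {n | ∃ C : Fin k → Finset V, IsPartialKColoring A k C ∧ ∑ i, (C i).card = n}

/-- π(D): minimum number of paths in a path partition. -/
noncomputable def piNum (A : V → V → Prop) : ℕ :=
  sInf {n | ∃ P : Finset (List V), IsPathPartition A P ∧ P.card = n}

/-- α(D): maximum size of a stable set. -/
noncomputable def alphaNum (A : V → V → Prop) : ℕ :=
  sSup {n | ∃ S : Finset V, DStable A (S : Set V) ∧ S.card = n}

/-- k-norm of a coloring. -/
def cnorm (k : ℕ) (C : Finset (Finset V)) : ℕ := ∑ c ∈ C, min c.card k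

/-- χ_k(D): minimum k-norm of a coloring. -/
noncomputable def chik (A : V → V → Prop) (k : ℕ) : ℕ :=
  sInf {n | ∃ C : Finset (Finset V), IsColoring A C ∧ cnorm k C = n}

/-- λ_k(D): maximum weight of a k-pack. -/
noncomputable def lamk (A : V → V → Prop) (k : ℕ) : ℕ :=
  sSup {n | ∃ P : Finset (List V), IsKPack A k P ∧ weight P = n}

set_option linter.unusedSectionVars false

def gph (k m : ℕ) : ℕ := ∑ ℓ ∈ Finset.range k, min m (ℓ+1)

lemma gph_zero (k : ℕ) : gph k 0 = 0 := by simp [gph]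

lemma gph_exchange {k j a b : ℕ} (h1 : 1 ≤ j) (hk : j ≤ k) (ha : j ≤ a) (hb : j ≤ b) :
    gph k (a + b - j + 1) + gph k (j - 1) < gph k a + gph k b := by
  unfold gph
  rw [← Finset.sum_add_distrib, ← Finset.sum_add_distrib]
  apply Finset.sum_lt_sum
  · intro i _; omega
  · exact ⟨j - 1, Finset.mem_range.2 (by omega), by omega⟩

lemma getLast?_cons_ne {α : Type*} (a : α) (l : List α) (h : l ≠ []) :
    (a :: l).getLast? = l.getLast? := by
  cases l with
  | nil => simp at h
  | cons b t => simp [List.getLast?]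

lemma absorb (A : V → V → Prop) (hin : InSemicomplete A) :
    ∀ (q : List V) (v : V), q.Chain' A → q.Nodup → v ∉ q →
    (∃ x ∈ q, A v x) →
    ∃ r : List V, r.Chain' A ∧ r.Nodup ∧ (∀ y, y ∈ r ↔ y = v ∨ y ∈ q) ∧
      r.length = q.length + 1 ∧ r.getLast? = q.getLast? ∧
      (r.head? = q.head? ∨ r = v :: q) := by
  intro q
  induction q with
  | nil => rintro v _ _ _ ⟨x, hx, _⟩; simp at hx
  | cons z q' ih =>
    rintro v hch hnd hv ⟨x, hx, hvx⟩
    by_cases hvz : A v z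
    · refine ⟨v :: z :: q', ?_, ?_, ?_, by simp, ?_, Or.inr rfl⟩
      · exact List.isChain_cons.2 ⟨fun y hy => by simp at hy; subst hy; exact hvz, hch⟩
      · exact List.nodup_cons.2 ⟨hv, hnd⟩
      · intro y; simp
      · simp
    · have hx' : x ∈ q' := by
        rcases List.mem_cons.1 hx with rfl | h
        · exact absurd hvx hvz
        · exact h
      have hq'ne : q' ≠ [] := by rintro rfl; simp at hx'
      have hv' : v ∉ q' := fun h => hv (List.mem_cons_of_mem _ h)
      obtain ⟨r', hch', hnd', hmem', hlen', hlast', hshape'⟩ :=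
        ih v hch.tail (List.nodup_cons.1 hnd).2 hv' ⟨x, hx', hvx⟩
      have hr'ne : r' ≠ [] := by
        intro h; rw [h] at hlen'; simp at hlen'
      have hzv : z ≠ v := fun h => hv (by rw [h]; exact List.mem_cons_self)
      have hznr' : z ∉ r' := by
        intro h
        rcases (hmem' z).1 h with h1 | h1
        · exact hzv h1
        · exact (List.nodup_cons.1 hnd).1 h1
      rcases hshape' with hhead | hcons
      · -- r'.head? = q'.head?
        refine ⟨z :: r', ?_, List.nodup_cons.2 ⟨hznr', hnd'⟩, ?_, by simp [hlen'], ?_, Or.inl (by simp)⟩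
        · refine List.isChain_cons.2 ⟨fun y hy => ?_, hch'⟩
          have : y ∈ q'.head? := by rwa [← hhead]
          exact (List.isChain_cons.1 hch).1 y this
        · intro y; simp [hmem' y]; tauto
        · rw [getLast?_cons_ne z r' hr'ne, getLast?_cons_ne z q' hq'ne, hlast']
      · -- r' = v :: q'
        obtain ⟨w, q'', rfl⟩ := List.exists_cons_of_ne_nil hq'ne
        have hvw : A v w := by
          rw [hcons] at hch'
          exact List.isChain_cons_cons.1 hch' |>.1
        have hzw : A z w := List.isChain_cons_cons.1 hch |>.1
        have hadj : DAdj A v z := hin w v z hvw hzw (fun h => hzv h.symm)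
        have hAzv : A z v := by
          rcases hadj with h | h
          · exact absurd h hvz
          · exact h
        refine ⟨z :: v :: w :: q'', ?_, ?_, ?_, by simp, ?_, Or.inl (by simp)⟩
        · exact List.isChain_cons_cons.2 ⟨hAzv, List.isChain_cons_cons.2 ⟨hvw, hch.tail⟩⟩
        · refine List.nodup_cons.2 ⟨?_, List.nodup_cons.2 ⟨hv', (List.nodup_cons.1 hnd).2⟩⟩
          simp only [List.mem_cons]
          push_neg
          refine ⟨fun h => hzv h, ?_⟩
          have := (List.nodup_cons.1 hnd).1
          simp at this
          tauto
        · intro y; simp; tauto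
        · simp

lemma mergePaths (A : V → V → Prop) (hin : InSemicomplete A) :
    ∀ (h q : List V) (u x : V), h.Chain' A → h.Nodup →
      q.Chain' A → q.Nodup → (∀ y ∈ h, y ∉ q) →
      h.getLast? = some u → x ∈ q → A u x →
      ∃ m : List V, m.Chain' A ∧ m.Nodup ∧ (∀ y, y ∈ m ↔ y ∈ h ∨ y ∈ q) ∧
        m.length = h.length + q.length ∧ m.getLast? = q.getLast? := by
  intro h
  induction h using List.reverseRecOn with
  | nil => intro q u x _ _ _ _ _ hlast _ _; simp at hlast
  | append_singleton h' w ih =>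
    intro q u x hch hnd hqch hqnd hdisj hlast hx hux
    have hwu : w = u := by simpa using hlast
    subst hwu
    have hwq : w ∉ q := hdisj w (by simp)
    obtain ⟨r, hrch, hrnd, hrmem, hrlen, hrlast, _⟩ :=
      absorb A hin q w hqch hqnd hwq ⟨x, hx, hux⟩
    rcases eq_or_ne h' [] with rfl | hne
    · refine ⟨r, hrch, hrnd, ?_, by simp [hrlen, Nat.add_comm], hrlast⟩
      intro y; rw [hrmem y]; simp
    · obtain ⟨u₂, hu₂⟩ : ∃ u₂, h'.getLast? = some u₂ := by
        cases hh : h'.getLast? with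
        | none => exact absurd (List.getLast?_eq_none_iff.1 hh) hne
        | some z => exact ⟨z, rfl⟩
      have hsplit := List.isChain_append.1 hch
      have hA : A u₂ w := hsplit.2.2 u₂ hu₂ w rfl
      have hndsplit := List.nodup_append.1 hnd
      have hwh' : w ∉ h' := by
        intro hmem
        exact hndsplit.2.2 w hmem w (by simp) rfl
      obtain ⟨m, hmch, hmnd, hmmem, hmlen, hmlast⟩ :=
        ih r u₂ w hsplit.1 hndsplit.1 hrch hrnd
          (fun y hy => by
            rw [hrmem y]
            push_neg
            exact ⟨fun h => hwh' (h ▸ hy), fun hq => hdisj y (by simp [hy]) hq⟩)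
          hu₂ ((hrmem w).2 (Or.inl rfl)) hA
      refine ⟨m, hmch, hmnd, ?_, by simp [hmlen, hrlen]; omega, by rw [hmlast, hrlast]⟩
      intro y
      rw [hmmem y, hrmem y]
      simp
      tauto

lemma exchange (A : V → V → Prop) (hin : InSemicomplete A) {k : ℕ}
    {P : Finset (List V)} (hP : IsPathPartition A P)
    {p q : List V} (hp : p ∈ P) (hq : q ∈ P) (hpq : p ≠ q)
    {j : ℕ} (hjk : j < k) {u v : V}
    (hu : p.reverse[j]? = some u) (hv : q.reverse[j]? = some v)
    (harc : A u v) :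
    ∃ P' : Finset (List V), IsPathPartition A P' ∧
      ∑ r ∈ P', gph k r.length < ∑ r ∈ P, gph k r.length := by
  obtain ⟨hpaths, hdisj, hcover⟩ := hP
  obtain ⟨hpne, hpnd, hpch⟩ := hpaths p hp
  obtain ⟨hqne, hqnd, hqch⟩ := hpaths q hq
  obtain ⟨hja', hueq⟩ := List.getElem?_eq_some_iff.1 hu
  obtain ⟨hjb', hveq⟩ := List.getElem?_eq_some_iff.1 hv
  rw [List.length_reverse] at hja' hjb'
  have hvq : v ∈ q := by
    rw [← hveq, List.getElem_reverse]
    exact List.getElem_mem _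
  set a := p.length with ha
  set b := q.length with hb
  set c := a - j with hc
  set h := p.take c with hhdef
  set t := p.drop c with htdef
  have hsplit : h ++ t = p := List.take_append_drop c p
  have hlenh : h.length = c := by
    rw [hhdef, List.length_take]; omega
  have hlent : t.length = j := by
    rw [htdef, List.length_drop]; omega
  have hndsplit : h.Nodup ∧ t.Nodup ∧ h.Disjoint t :=
    by have := List.nodup_append.1 (by rw [hsplit]; exact hpnd); exact ⟨this.1, this.2.1, fun x hx hy => this.2.2 x hx x hy rfl⟩
  have hchsplit := List.isChain_append.1 (show (h ++ t).Chain' A by rw [hsplit]; exact hpch)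
  have hmemp : ∀ y : V, y ∈ p ↔ y ∈ h ∨ y ∈ t := by
    intro y; rw [← hsplit]; simp
  have hlasth : h.getLast? = some u := by
    rw [List.getLast?_eq_getElem?, hlenh, hhdef, List.getElem?_take, if_pos (by omega)]
    rw [List.getElem?_eq_some_iff]
    refine ⟨by omega, ?_⟩
    rw [← hueq, List.getElem_reverse]
    congr 1
    omega
  have hdisj_hq : ∀ y ∈ h, y ∉ q := by
    intro y hy
    exact hdisj p hp q hq hpq y ((hmemp y).2 (Or.inl hy))
  obtain ⟨m, hmch, hmnd, hmmem, hmlen, _⟩ :=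
    mergePaths A hin h q u v hchsplit.1 hndsplit.1 hqch hqnd hdisj_hq hlasth hvq harc
  have hmne : m ≠ [] := by
    intro h0
    rw [h0] at hmlen
    simp at hmlen
    omega
  have hvm : v ∈ m := (hmmem v).2 (Or.inr hvq)
  set base := (P.erase p).erase q with hbasedef
  have hbase_mem : ∀ r, r ∈ base ↔ r ≠ q ∧ r ≠ p ∧ r ∈ P := by
    intro r
    rw [hbasedef, Finset.mem_erase, Finset.mem_erase]
  have hqp' : q ∈ P.erase p := Finset.mem_erase.2 ⟨Ne.symm hpq, hq⟩
  have hsumP : ∑ r ∈ base, gph k r.length + gph k b + gph k a = ∑ r ∈ P, gph k r.length := by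
    have e1 := Finset.sum_erase_add (P.erase p) (fun r => gph k r.length) hqp'
    have e2 := Finset.sum_erase_add P (fun r => gph k r.length) hp
    simp only [hbasedef, ha, hb] at *
    omega
  -- disjointness of m with base elements
  have hm_base_disj : ∀ r ∈ base, ∀ x : V, x ∈ m → x ∉ r := by
    intro r hr x hxm
    obtain ⟨hrq, hrp, hrP⟩ := (hbase_mem r).1 hr
    rcases (hmmem x).1 hxm with hxh | hxq
    · exact hdisj p hp r hrP (Ne.symm hrp) x ((hmemp x).2 (Or.inl hxh))
    · exact hdisj q hq r hrP (Ne.symm hrq) x hxq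
  have hm_not_base : m ∉ base := by
    intro hmb
    exact hm_base_disj m hmb v hvm hvm
  have ht_sub_p : ∀ y ∈ t, y ∈ p := fun y hy => (hmemp y).2 (Or.inr hy)
  -- key arithmetic
  have hkey : gph k (m.length) + gph k j < gph k a + gph k b := by
    have e1 : m.length = a + b - (j+1) + 1 := by rw [hmlen, hlenh]; omega
    have e2 : j = (j+1) - 1 := by omega
    rw [e1]
    nth_rewrite 2 [e2]
    exact gph_exchange (by omega) (by omega) (by omega) (by omega)
  rcases Nat.eq_zero_or_pos j with rfl | hjpos
  · -- t is empty
    have htnil : t = [] := List.eq_nil_of_length_eq_zero hlent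
    have hph : h = p := by rw [← hsplit, htnil, List.append_nil]
    refine ⟨insert m base, ⟨?_, ?_, ?_⟩, ?_⟩
    · intro r hr
      rcases Finset.mem_insert.1 hr with rfl | hr
      · exact ⟨hmne, hmnd, hmch⟩
      · exact hpaths r ((hbase_mem r).1 hr).2.2
    · intro r1 h1 r2 h2 hne x hx1
      intro hx2
      rcases Finset.mem_insert.1 h1 with e1 | h1'
      · rcases Finset.mem_insert.1 h2 with e2 | h2'
        · exact hne (e1.trans e2.symm)
        · rw [e1] at hx1
          exact hm_base_disj r2 h2' x hx1 hx2
      · rcases Finset.mem_insert.1 h2 with e2 | h2'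
        · rw [e2] at hx2
          exact hm_base_disj r1 h1' x hx2 hx1
        · obtain ⟨_, _, h1P⟩ := (hbase_mem r1).1 h1'
          obtain ⟨_, _, h2P⟩ := (hbase_mem r2).1 h2'
          exact hdisj r1 h1P r2 h2P hne x hx1 hx2
    · intro y
      obtain ⟨r, hrP, hyr⟩ := hcover y
      by_cases hrp : r = p
      · exact ⟨m, Finset.mem_insert_self _ _, (hmmem y).2 (Or.inl (by rw [hph]; exact hrp ▸ hyr))⟩
      · by_cases hrq : r = q
        · exact ⟨m, Finset.mem_insert_self _ _, (hmmem y).2 (Or.inr (hrq ▸ hyr))⟩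
        · exact ⟨r, Finset.mem_insert_of_mem ((hbase_mem r).2 ⟨hrq, hrp, hrP⟩), hyr⟩
    · rw [Finset.sum_insert hm_not_base]
      rw [gph_zero] at hkey
      -- hkey : gph k m.length + 0 < gph k a + gph k b
      omega
  · -- t nonempty
    have htne : t ≠ [] := by
      intro h0; rw [h0] at hlent; simp at hlent; omega
    obtain ⟨y₀, hy₀⟩ := List.exists_mem_of_ne_nil t htne
    have ht_not_base : t ∉ base := by
      intro htb
      obtain ⟨_, htp, htP⟩ := (hbase_mem t).1 htb
      exact hdisj p hp t htP (Ne.symm htp) y₀ (ht_sub_p y₀ hy₀) hy₀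
    have hmt_disj : ∀ x : V, x ∈ m → x ∉ t := by
      intro x hxm hxt
      rcases (hmmem x).1 hxm with hxh | hxq
      · exact hndsplit.2.2 hxh hxt
      · exact hdisj p hp q hq hpq x (ht_sub_p x hxt) hxq
    have hm_ne_t : m ≠ t := by
      intro h0
      exact hmt_disj v hvm (h0 ▸ hvm)
    refine ⟨insert m (insert t base), ⟨?_, ?_, ?_⟩, ?_⟩
    · intro r hr
      rcases Finset.mem_insert.1 hr with rfl | hr
      · exact ⟨hmne, hmnd, hmch⟩
      · rcases Finset.mem_insert.1 hr with rfl | hr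
        · exact ⟨htne, hndsplit.2.1, hchsplit.2.1⟩
        · exact hpaths r ((hbase_mem r).1 hr).2.2
    · have hbase_t_disj : ∀ r ∈ base, ∀ x : V, x ∈ t → x ∉ r := by
        intro r hr x hxt
        obtain ⟨hrq, hrp, hrP⟩ := (hbase_mem r).1 hr
        exact hdisj p hp r hrP (Ne.symm hrp) x (ht_sub_p x hxt)
      intro r1 h1 r2 h2 hne x hx1
      intro hx2
      have hx1' : x ∈ m ∨ x ∈ t ∨ (r1 ∈ base ∧ x ∈ r1) := by
        rcases Finset.mem_insert.1 h1 with e | h1'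
        · left; rw [← e]; exact hx1
        · rcases Finset.mem_insert.1 h1' with e | h1''
          · right; left; rw [← e]; exact hx1
          · right; right; exact ⟨h1'', hx1⟩
      have hx2' : x ∈ m ∨ x ∈ t ∨ (r2 ∈ base ∧ x ∈ r2) := by
        rcases Finset.mem_insert.1 h2 with e | h2'
        · left; rw [← e]; exact hx2
        · rcases Finset.mem_insert.1 h2' with e | h2''
          · right; left; rw [← e]; exact hx2
          · right; right; exact ⟨h2'', hx2⟩
      -- show r1 = r2 in every compatible case
      have hxp : x ∈ m → x ∈ t → False := fun hm' ht' => hmt_disj x hm' ht'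
      have hxmb : x ∈ m → ∀ r ∈ base, x ∈ r → False := fun hm' r hr hxr => hm_base_disj r hr x hm' hxr
      have hxtb : x ∈ t → ∀ r ∈ base, x ∈ r → False := fun ht' r hr hxr => hbase_t_disj r hr x ht' hxr
      have huniq : ∀ r ∈ base, ∀ r' ∈ base, x ∈ r → x ∈ r' → r = r' := by
        intro r hr r' hr' hxr hxr'
        by_contra hne'
        exact hdisj r ((hbase_mem r).1 hr).2.2 r' ((hbase_mem r').1 hr').2.2 hne' x hxr hxr'
      have he1 : ∀ e : List V, e ∈ insert m (insert t base) → x ∈ e →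
          (e = m ∧ x ∈ m) ∨ (e = t ∧ x ∈ t) ∨ (e ∈ base ∧ x ∈ e) := by
        intro e he hxe
        rcases Finset.mem_insert.1 he with e' | he'
        · exact Or.inl ⟨e', e' ▸ hxe⟩
        · rcases Finset.mem_insert.1 he' with e' | he''
          · exact Or.inr (Or.inl ⟨e', e' ▸ hxe⟩)
          · exact Or.inr (Or.inr ⟨he'', hxe⟩)
      apply hne
      rcases he1 r1 h1 hx1 with ⟨e1, hm1⟩ | ⟨e1, ht1⟩ | ⟨hb1, hr1⟩ <;>
        rcases he1 r2 h2 hx2 with ⟨e2, hm2⟩ | ⟨e2, ht2⟩ | ⟨hb2, hr2⟩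
      · rw [e1, e2]
      · exact absurd ht2 (fun h => hxp hm1 h)
      · exact absurd hr2 (fun h => hxmb hm1 r2 hb2 h)
      · exact absurd ht1 (fun h => hxp hm2 h)
      · rw [e1, e2]
      · exact absurd hr2 (fun h => hxtb ht1 r2 hb2 h)
      · exact absurd hr1 (fun h => hxmb hm2 r1 hb1 h)
      · exact absurd hr1 (fun h => hxtb ht2 r1 hb1 h)
      · exact huniq r1 hb1 r2 hb2 hr1 hr2
    · intro y
      obtain ⟨r, hrP, hyr⟩ := hcover y
      by_cases hrp : r = p
      · subst hrp
        rcases (hmemp y).1 hyr with hyh | hyt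
        · exact ⟨m, Finset.mem_insert_self _ _, (hmmem y).2 (Or.inl hyh)⟩
        · exact ⟨t, Finset.mem_insert_of_mem (Finset.mem_insert_self _ _), hyt⟩
      · by_cases hrq : r = q
        · exact ⟨m, Finset.mem_insert_self _ _, (hmmem y).2 (Or.inr (hrq ▸ hyr))⟩
        · exact ⟨r, Finset.mem_insert_of_mem (Finset.mem_insert_of_mem
            ((hbase_mem r).2 ⟨hrq, hrp, hrP⟩)), hyr⟩
    · have hm_not : m ∉ insert t base :=
        fun hmem => (Finset.mem_insert.1 hmem).elim hm_ne_t hm_not_base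
      rw [Finset.sum_insert hm_not, Finset.sum_insert ht_not_base, hlent]
      omega

/-- Linial's Conjecture for in-semicomplete digraphs: π_k(D) ≤ α_k(D). -/
theorem stmt18 (A : V → V → Prop) (hirr : Irreflexive A)
    (hin : InSemicomplete A) (k : ℕ) (hk : 0 < k) :
    pik A k ≤ alphak A k := by
  classical
  have hex : ∃ P : Finset (List V), IsPathPartition A P := by
    refine ⟨Finset.univ.image (fun v => [v]), ?_, ?_, ?_⟩
    · intro p hp
      obtain ⟨v, _, rfl⟩ := Finset.mem_image.1 hp
      exact ⟨by simp, by simp, List.IsChain.singleton _⟩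
    · intro p hp q hq hne x hxp hxq
      obtain ⟨v, _, rfl⟩ := Finset.mem_image.1 hp
      obtain ⟨w, _, rfl⟩ := Finset.mem_image.1 hq
      simp at hxp hxq
      subst hxp
      subst hxq
      exact hne rfl
    · intro v
      exact ⟨[v], Finset.mem_image.2 ⟨v, Finset.mem_univ v, rfl⟩, by simp⟩
  obtain ⟨P₀, hP₀⟩ := hex
  have hSne : Set.Nonempty {n | ∃ P : Finset (List V),
      IsPathPartition A P ∧ ∑ r ∈ P, gph k r.length = n} := ⟨_, P₀, hP₀, rfl⟩
  obtain ⟨P, hPpart, hPval⟩ := Nat.sInf_mem hSne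
  have hPmin : ∀ Q : Finset (List V), IsPathPartition A Q →
      ∑ r ∈ P, gph k r.length ≤ ∑ r ∈ Q, gph k r.length := by
    intro Q hQ
    rw [hPval]
    exact Nat.sInf_le ⟨Q, hQ, rfl⟩
  obtain ⟨hpaths, hdisjP, hcover⟩ := hPpart
  set C : Fin k → Finset V := fun j => P.biUnion (fun p => (p.reverse[(j:ℕ)]?).toFinset)
    with hCdef
  have hmemC : ∀ (j : Fin k) (x : V), x ∈ C j ↔ ∃ p ∈ P, p.reverse[(j:ℕ)]? = some x := by
    intro j x
    simp [hCdef, Finset.mem_biUnion, Option.mem_toFinset, Option.mem_def]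
  have hxin : ∀ (p : List V) (i : ℕ) (x : V), p.reverse[i]? = some x → x ∈ p := by
    intro p i x hx
    obtain ⟨hi, he⟩ := List.getElem?_eq_some_iff.1 hx
    rw [← he, List.getElem_reverse]
    exact List.getElem_mem _
  have hstable : ∀ j : Fin k, DStable A ((C j : Set V)) := by
    intro j u hu v hv hne hadj
    rw [Finset.mem_coe] at hu hv
    obtain ⟨p, hp, hup⟩ := (hmemC j u).1 hu
    obtain ⟨q, hq, hvq⟩ := (hmemC j v).1 hv
    have hpq : p ≠ q := by
      intro h
      rw [h] at hup
      exact hne (Option.some.inj (hup.symm.trans hvq))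
    rcases hadj with harc | harc
    · obtain ⟨P', hP'part, hlt⟩ :=
        exchange A hin ⟨hpaths, hdisjP, hcover⟩ hp hq hpq j.2 hup hvq harc
      exact absurd (hPmin P' hP'part) (by omega)
    · obtain ⟨P', hP'part, hlt⟩ :=
        exchange A hin ⟨hpaths, hdisjP, hcover⟩ hq hp (Ne.symm hpq) j.2 hvq hup harc
      exact absurd (hPmin P' hP'part) (by omega)
  have hdisjC : ∀ i j : Fin k, i ≠ j → Disjoint (C i) (C j) := by
    intro i j hij
    rw [Finset.disjoint_left]
    intro x hxi hxj
    obtain ⟨p, hp, hxp⟩ := (hmemC i x).1 hxi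
    obtain ⟨q, hq, hxq⟩ := (hmemC j x).1 hxj
    have hpq : p = q := by
      by_contra hne
      exact hdisjP p hp q hq hne x (hxin p i x hxp) (hxin q j x hxq)
    subst hpq
    obtain ⟨hi, hei⟩ := List.getElem?_eq_some_iff.1 hxp
    obtain ⟨hj, hej⟩ := List.getElem?_eq_some_iff.1 hxq
    have hieq : (i : ℕ) = (j : ℕ) := by
      have hnd := (hpaths p hp).2.1
      exact (List.Nodup.getElem_inj_iff (List.nodup_reverse.2 hnd)).1 (by rw [hei, hej])
    exact hij (Fin.ext hieq)
  have hcard : ∑ i : Fin k, (C i).card = knorm k P := by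
    have hdisjfam : ∀ j : Fin k, ∀ p ∈ P, ∀ q ∈ P, p ≠ q →
        Disjoint ((p.reverse[(j:ℕ)]?).toFinset) ((q.reverse[(j:ℕ)]?).toFinset) := by
      intro j p hp q hq hne
      rw [Finset.disjoint_left]
      intro x hxp hxq
      rw [Option.mem_toFinset, Option.mem_def] at hxp hxq
      exact hdisjP p hp q hq hne x (hxin p j x hxp) (hxin q j x hxq)
    have hcardj : ∀ j : Fin k, (C j).card = ∑ p ∈ P, if (j:ℕ) < p.length then 1 else 0 := by
      intro j
      rw [hCdef]
      rw [Finset.card_biUnion (hdisjfam j)]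
      apply Finset.sum_congr rfl
      intro p hp
      by_cases hlen : (j:ℕ) < p.length
      · rw [if_pos hlen]
        have h1 : p.reverse[(j:ℕ)]? = some (p.reverse[(j:ℕ)]'(by simpa using hlen)) :=
          List.getElem?_eq_getElem _
        rw [h1]
        rfl
      · rw [if_neg hlen]
        have h1 : p.reverse[(j:ℕ)]? = none := List.getElem?_eq_none (by simpa using hlen)
        rw [h1]
        rfl
    calc ∑ i : Fin k, (C i).card
        = ∑ i : Fin k, ∑ p ∈ P, (if (i:ℕ) < p.length then 1 else 0) :=
          Finset.sum_congr rfl (fun i _ => hcardj i)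
      _ = ∑ p ∈ P, ∑ i : Fin k, (if (i:ℕ) < p.length then 1 else 0) := Finset.sum_comm
      _ = ∑ p ∈ P, min p.length k := by
          apply Finset.sum_congr rfl
          intro p _
          rw [Fin.sum_univ_eq_sum_range (fun i => if i < p.length then 1 else 0) k]
          rw [Finset.sum_boole]
          have : (Finset.range k).filter (fun i => i < p.length) = Finset.range (min p.length k) := by
            ext i
            simp only [Finset.mem_filter, Finset.mem_range]
            omega
          rw [this]
          simp
      _ = knorm k P := rfl
  have h1 : pik A k ≤ knorm k P := Nat.sInf_le ⟨P, ⟨hpaths, hdisjP, hcover⟩, rfl⟩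
  have hbdd : BddAbove {n | ∃ C : Fin k → Finset V,
      IsPartialKColoring A k C ∧ ∑ i, (C i).card = n} := by
    refine ⟨k * Fintype.card V, ?_⟩
    rintro n ⟨C', _, rfl⟩
    calc ∑ i, (C' i).card ≤ ∑ _i : Fin k, Fintype.card V :=
          Finset.sum_le_sum (fun i _ => Finset.card_le_univ _)
      _ = k * Fintype.card V := by simp [Finset.sum_const, mul_comm]
  have h2 : knorm k P ≤ alphak A k :=
    hcard ▸ le_csSup hbdd ⟨C, ⟨hstable, hdisjC⟩, rfl⟩
  exact h1.trans h2

end DigraphPaper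
end

section
/- For every in-semicomplete digraph D and every positive integer k, χ_k(D) ≤ λ_k(D) (the dual Linial Conjecture holds for in-semicomplete digraphs). -/
open scoped Classical

namespace DigraphPaper

variable {V : Type*} [Fintype V] [DecidableEq V]

set_option linter.unusedSectionVars false
set_option linter.unnecessarySimpa false
set_option linter.unusedVariables false
set_option maxHeartbeats 1000000
section Lists
variable {A : V → V → Prop}

lemma chain'_concat {l : List V} {y : V} :
    List.Chain' A (l ++ [y]) ↔ List.Chain' A l ∧ ∀ x ∈ l.getLast?, A x y := by
  simp only [List.Chain']; rw [List.isChain_append]; simp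

lemma chain'_concat_of {l : List V} {y : V} (h : List.Chain' A l)
    (h2 : ∀ x ∈ l.getLast?, A x y) : List.Chain' A (l ++ [y]) :=
  chain'_concat.2 ⟨h, h2⟩

lemma nodup_concat {l : List V} {y : V} :
    (l ++ [y]).Nodup ↔ l.Nodup ∧ y ∉ l := by
  constructor
  · intro h
    exact ⟨h.of_append_left, by
      intro hy
      exact (List.disjoint_of_nodup_append h) hy (by simp)⟩
  · intro ⟨h1, h2⟩
    rw [List.nodup_append]
    exact ⟨h1, by simp, by simp [List.disjoint_singleton]; exact fun a ha hay => h2 (hay ▸ ha)⟩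

lemma last_concat_arc {l : List V} {y : V} (h : List.Chain' A (l ++ [y]))
    {x : V} (hx : l.getLast? = some x) : A x y :=
  (chain'_concat.1 h).2 x hx

/-- Merging lemma for in-semicomplete digraphs (in-path-merging). -/
lemma merge_lemma (hin : InSemicomplete A) :
    ∀ (n : ℕ) (p q : List V) (y : V), p.length + q.length ≤ n →
    List.Chain' A (p ++ [y]) → List.Chain' A (q ++ [y]) →
    (p ++ [y]).Nodup → (q ++ [y]).Nodup →
    (∀ a ∈ p, a ∉ q) →
    ∃ r : List V, r.length = p.length + q.length ∧ (r ++ [y]).Nodup ∧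
      List.Chain' A (r ++ [y]) ∧ ∀ a, a ∈ r ↔ a ∈ p ∨ a ∈ q := by
  intro n
  induction n with
  | zero =>
    intro p q y hlen _ hcq _ hnq _
    have hp : p = [] := by cases p with
      | nil => rfl
      | cons a l => simp at hlen
    have hq : q = [] := by
      subst hp
      cases q with
      | nil => rfl
      | cons a l => simp at hlen
    subst hp; subst hq
    exact ⟨[], by simp, by simpa using hnq, by simpa using hcq, by simp⟩
  | succ n ih =>
    intro p q y hlen hcp hcq hnp hnq hdisj
    rcases List.eq_nil_or_concat p with hp | ⟨p', u, hp⟩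
    · subst hp
      exact ⟨q, by simp, hnq, hcq, by simp⟩
    rw [List.concat_eq_append] at hp
    rcases List.eq_nil_or_concat q with hq | ⟨q', w, hq⟩
    · subst hq
      exact ⟨p, by simp, hnp, hcp, by simp⟩
    rw [List.concat_eq_append] at hq
    subst hp; subst hq
    have hu_mem : u ∈ p' ++ [u] := by simp
    have hw_mem : w ∈ q' ++ [w] := by simp
    have huw : u ≠ w := fun h => hdisj u hu_mem (h ▸ hw_mem)
    have hAy : A u y := last_concat_arc hcp List.getLast?_concat
    have hAwy : A w y := last_concat_arc hcq List.getLast?_concat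
    have hnp' : (p' ++ [u]).Nodup := (nodup_concat.1 hnp).1
    have hnq' : (q' ++ [w]).Nodup := (nodup_concat.1 hnq).1
    have hynp : y ∉ p' ++ [u] := (nodup_concat.1 hnp).2
    have hynq : y ∉ q' ++ [w] := (nodup_concat.1 hnq).2
    rcases hin y u w hAy hAwy huw with huw' | hwu'
    · -- A u w : recurse on (p'++[u], q', w)
      have hcp2 : List.Chain' A ((p' ++ [u]) ++ [w]) := by
        apply chain'_concat_of (chain'_concat.1 hcp).1
        intro x hx
        rw [List.getLast?_concat] at hx
        simp at hx; subst hx; exact huw'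
      have hcq2 : List.Chain' A (q' ++ [w]) := (chain'_concat.1 hcq).1
      have hnp2 : ((p' ++ [u]) ++ [w]).Nodup :=
        nodup_concat.2 ⟨hnp', fun hw => hdisj w hw hw_mem⟩
      have hdisj2 : ∀ a ∈ p' ++ [u], a ∉ q' := fun a ha haq => hdisj a ha (by simp [haq])
      have hlen2 : (p' ++ [u]).length + q'.length ≤ n := by simp at hlen ⊢; omega
      obtain ⟨r, hrlen, hrnd, hrch, hrmem⟩ := ih (p' ++ [u]) q' w hlen2 hcp2 hcq2 hnp2 hnq' hdisj2
      refine ⟨r ++ [w], ?_, ?_, ?_, ?_⟩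
      · simp only [List.length_append, List.length_singleton, hrlen]; omega
      · refine nodup_concat.2 ⟨hrnd, ?_⟩
        intro hy
        simp only [List.mem_append, List.mem_singleton] at hy
        rcases hy with hy | rfl
        · rcases (hrmem y).1 hy with h | h
          · exact hynp h
          · exact hynq (by simp [h])
        · exact hynq (by simp)
      · apply chain'_concat_of hrch
        intro x hx
        rw [List.getLast?_concat] at hx
        simp at hx; subst hx; exact hAwy
      · intro a
        simp only [hrmem, List.mem_append, List.mem_singleton]
        tauto
    · -- A w u : recurse on (q'++[w], p', u)
      have hcq2 : List.Chain' A ((q' ++ [w]) ++ [u]) := by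
        apply chain'_concat_of (chain'_concat.1 hcq).1
        intro x hx
        rw [List.getLast?_concat] at hx
        simp at hx; subst hx; exact hwu'
      have hcp2 : List.Chain' A (p' ++ [u]) := (chain'_concat.1 hcp).1
      have hnq2 : ((q' ++ [w]) ++ [u]).Nodup :=
        nodup_concat.2 ⟨hnq', fun hu => hdisj u hu_mem hu⟩
      have hdisj2 : ∀ a ∈ q' ++ [w], a ∉ p' := by
        intro a ha hap
        exact hdisj a (by simp [hap]) ha
      have hlen2 : (q' ++ [w]).length + p'.length ≤ n := by simp at hlen ⊢; omega
      obtain ⟨r, hrlen, hrnd, hrch, hrmem⟩ := ih (q' ++ [w]) p' u hlen2 hcq2 hcp2 hnq2 hnp' hdisj2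
      refine ⟨r ++ [u], ?_, ?_, ?_, ?_⟩
      · simp only [List.length_append, List.length_singleton, hrlen]; omega
      · refine nodup_concat.2 ⟨hrnd, ?_⟩
        intro hy
        simp only [List.mem_append, List.mem_singleton] at hy
        rcases hy with hy | rfl
        · rcases (hrmem y).1 hy with h | h
          · exact hynq h
          · exact hynp (by simp [h])
        · exact hynp (by simp)
      · apply chain'_concat_of hrch
        intro x hx
        rw [List.getLast?_concat] at hx
        simp at hx; subst hx; exact hAy
      · intro a
        simp only [hrmem, List.mem_append, List.mem_singleton]
        tauto

/-- Insertion lemma: if `A s y`, a chain `q ++ [y]` absorbs `s`. -/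
lemma insert_lemma (hin : InSemicomplete A) :
    ∀ (n : ℕ) (q : List V) (y s : V), q.length ≤ n →
    List.Chain' A (q ++ [y]) → (q ++ [y]).Nodup → s ∉ q → s ≠ y → A s y →
    ∃ r : List V, r.length = q.length + 1 ∧ (r ++ [y]).Nodup ∧
      List.Chain' A (r ++ [y]) ∧ ∀ a, a ∈ r ↔ a ∈ q ∨ a = s := by
  intro n
  induction n with
  | zero =>
    intro q y s hlen hc hn hs hsy hA
    have hq : q = [] := by cases q with
      | nil => rfl
      | cons a l => simp at hlen
    subst hq
    refine ⟨[s], by simp, ?_, ?_, by simp⟩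
    · simp [hsy]
    · exact List.isChain_pair.2 hA
  | succ n ih =>
    intro q y s hlen hc hn hs hsy hA
    rcases List.eq_nil_or_concat q with hq | ⟨q', x, hq⟩
    · subst hq
      refine ⟨[s], by simp, by simp [hsy], List.isChain_pair.2 hA, by simp⟩
    rw [List.concat_eq_append] at hq
    subst hq
    have hx_mem : x ∈ q' ++ [x] := by simp
    have hAxy : A x y := last_concat_arc hc List.getLast?_concat
    have hsx : s ≠ x := fun h => hs (h ▸ hx_mem)
    have hnq' : (q' ++ [x]).Nodup := (nodup_concat.1 hn).1
    have hyn : y ∉ q' ++ [x] := (nodup_concat.1 hn).2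
    rcases hin y s x hA hAxy hsx with hsx' | hxs'
    · -- A s x : recurse into q'
      have hc2 : List.Chain' A (q' ++ [x]) := (chain'_concat.1 hc).1
      have hs2 : s ∉ q' := fun h => hs (by simp [h])
      have hlen2 : q'.length ≤ n := by simp at hlen; omega
      obtain ⟨r, hrlen, hrnd, hrch, hrmem⟩ := ih q' x s hlen2 hc2 hnq' hs2 hsx hsx'
      refine ⟨r ++ [x], ?_, ?_, ?_, ?_⟩
      · simp only [List.length_append, List.length_singleton, hrlen]
      · refine nodup_concat.2 ⟨hrnd, ?_⟩
        intro hy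
        simp only [List.mem_append, List.mem_singleton] at hy
        rcases hy with hy | rfl
        · rcases (hrmem y).1 hy with h | h
          · exact hyn (by simp [h])
          · exact hsy h.symm
        · exact hyn (by simp)
      · apply chain'_concat_of hrch
        intro z hz
        rw [List.getLast?_concat] at hz
        simp at hz; subst hz; exact hAxy
      · intro a
        simp only [List.mem_append, List.mem_singleton, hrmem]
        tauto
    · -- A x s : put s after x
      refine ⟨(q' ++ [x]) ++ [s], ?_, ?_, ?_, ?_⟩
      · simp
      · refine nodup_concat.2 ⟨nodup_concat.2 ⟨hnq', hs⟩, ?_⟩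
        intro hy
        simp only [List.mem_append, List.mem_singleton] at hy
        rcases hy with hy | rfl
        · exact hyn (by simp only [List.mem_append, List.mem_singleton]; tauto)
        · exact hsy rfl
      · apply chain'_concat_of
        · apply chain'_concat_of (chain'_concat.1 hc).1
          intro z hz
          rw [List.getLast?_concat] at hz
          simp at hz; subst hz; exact hxs'
        · intro z hz
          rw [List.getLast?_concat] at hz
          simp at hz; subst hz; exact hA
      · intro a; simp; tauto

end Lists
section Packs
variable {A : V → V → Prop}

lemma getLast?_eq_getLastD {p : List V} (hp : p ≠ []) (d : V) :
    p.getLast? = some (p.getLastD d) := by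
  rw [List.getLast?_eq_getLast hp, List.getLastD_eq_getLast?, List.getLast?_eq_getLast hp]
  rfl

lemma getLastD_mem {p : List V} (hp : p ≠ []) (d : V) : p.getLastD d ∈ p := by
  rw [List.getLastD_eq_getLast?, List.getLast?_eq_getLast hp]
  exact List.getLast_mem hp

lemma dropLast_concat_getLastD {p : List V} (hp : p ≠ []) (d : V) :
    p.dropLast ++ [p.getLastD d] = p := by
  rw [List.getLastD_eq_getLast?, List.getLast?_eq_getLast hp]
  exact List.dropLast_append_getLast hp

/-- From a pack we can get one with the same weight and cover whose
terminals are pairwise non-adjacent. -/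
lemma stabilize (hin : InSemicomplete A) (d : V) :
    ∀ (m : ℕ) (Q : Finset (List V)), Q.card ≤ m →
    (∀ p ∈ Q, IsPath A p) → PDisjoint Q →
    ∃ R : Finset (List V), R.card ≤ Q.card ∧ (∀ p ∈ R, IsPath A p) ∧ PDisjoint R ∧
      (∑ p ∈ R, p.length) = (∑ p ∈ Q, p.length) ∧
      (∀ x : V, (∃ p ∈ R, x ∈ p) ↔ (∃ p ∈ Q, x ∈ p)) ∧
      (∀ p ∈ R, ∀ q ∈ R, p ≠ q → ¬ DAdj A (p.getLastD d) (q.getLastD d)) := by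
  intro m
  induction m with
  | zero =>
    intro Q hcard _ _
    have : Q = ∅ := Finset.card_eq_zero.1 (Nat.le_zero.1 hcard)
    subst this
    exact ⟨∅, by simp, by simp, by intro p hp; simp at hp, by simp, by simp, by simp⟩
  | succ m ih =>
    intro Q hcard hpaths hdisj
    by_cases hstab : ∀ p ∈ Q, ∀ q ∈ Q, p ≠ q → ¬ DAdj A (p.getLastD d) (q.getLastD d)
    · exact ⟨Q, le_refl _, hpaths, hdisj, rfl, by simp, hstab⟩
    push_neg at hstab
    obtain ⟨p, hpQ, q, hqQ, hpq, hDadj⟩ := hstab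
    -- A merging step, for either orientation
    have step : ∀ p ∈ Q, ∀ q ∈ Q, p ≠ q → A (p.getLastD d) (q.getLastD d) →
        ∃ R₀ : Finset (List V), R₀.card = Q.card - 1 ∧ (∀ t ∈ R₀, IsPath A t) ∧ PDisjoint R₀ ∧
        (∑ t ∈ R₀, t.length) = (∑ t ∈ Q, t.length) ∧
        (∀ x : V, (∃ t ∈ R₀, x ∈ t) ↔ (∃ t ∈ Q, x ∈ t)) := by
      clear hpq hDadj hpQ hqQ p q
      intro p hpQ q hqQ hpq hA
      obtain ⟨hpne, hpnd, hpch⟩ := hpaths p hpQ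
      obtain ⟨hqne, hqnd, hqch⟩ := hpaths q hqQ
      set tp := p.getLastD d with htp
      set tq := q.getLastD d with htq
      have hdecq : q.dropLast ++ [tq] = q := dropLast_concat_getLastD hqne d
      have htq_mem : tq ∈ q := getLastD_mem hqne d
      have htp_mem : tp ∈ p := getLastD_mem hpne d
      have hPQdisj : ∀ a ∈ p, a ∉ q := hdisj p hpQ q hqQ hpq
      have hc1 : List.Chain' A (p ++ [tq]) := by
        apply chain'_concat_of hpch
        intro x hx
        rw [getLast?_eq_getLastD hpne d, Option.mem_some_iff] at hx
        subst hx; exact hA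
      have hc2 : List.Chain' A (q.dropLast ++ [tq]) := by rw [hdecq]; exact hqch
      have hn1 : (p ++ [tq]).Nodup := nodup_concat.2 ⟨hpnd, fun h => hPQdisj tq h htq_mem⟩
      have hn2 : (q.dropLast ++ [tq]).Nodup := by rw [hdecq]; exact hqnd
      have hd12 : ∀ a ∈ p, a ∉ q.dropLast := fun a ha had =>
        hPQdisj a ha (List.dropLast_subset q had)
      obtain ⟨r, hrlen, hrnd, hrch, hrmem⟩ := merge_lemma hin (p.length + q.dropLast.length)
        p q.dropLast tq (le_refl _) hc1 hc2 hn1 hn2 hd12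
      set mg := r ++ [tq] with hmg
      have hmg_mem : ∀ a, a ∈ mg ↔ a ∈ p ∨ a ∈ q := by
        intro a
        simp only [hmg, List.mem_append, List.mem_singleton, hrmem]
        constructor
        · rintro ((h | h) | rfl)
          · exact Or.inl h
          · exact Or.inr (List.dropLast_subset q h)
          · exact Or.inr htq_mem
        · rintro (h | h)
          · exact Or.inl (Or.inl h)
          · by_cases hx : a = tq
            · exact Or.inr hx
            · left; right
              have h2 := (List.mem_append.1 (hdecq ▸ h))
              rcases h2 with h' | h'
              · exact h'
              · simp at h'; exact absurd h' hx
      have hmg_len : mg.length = p.length + q.length := by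
        have : q.dropLast.length = q.length - 1 := List.length_dropLast
        have hq1 : 1 ≤ q.length := List.length_pos_iff.2 hqne
        simp only [hmg, List.length_append, List.length_singleton, hrlen]
        omega
      have hmg_path : IsPath A mg := ⟨by simp [hmg], hrnd, hrch⟩
      set Q2 := (Q.erase p).erase q with hQ2
      have hQ2sub : ∀ t ∈ Q2, t ∈ Q ∧ t ≠ p ∧ t ≠ q := by
        intro t ht
        simp only [hQ2, Finset.mem_erase] at ht
        exact ⟨ht.2.2, ht.2.1, ht.1⟩
      have hmg_notin : mg ∉ Q2 := by
        intro hmem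
        obtain ⟨htQ, htp', _⟩ := hQ2sub mg hmem
        exact hdisj mg htQ p hpQ htp' tp ((hmg_mem tp).2 (Or.inl htp_mem)) htp_mem
      refine ⟨insert mg Q2, ?_, ?_, ?_, ?_, ?_⟩
      · rw [Finset.card_insert_of_notMem hmg_notin]
        have h1 : q ∈ Q.erase p := Finset.mem_erase.2 ⟨fun h => hpq h.symm, hqQ⟩
        rw [hQ2, Finset.card_erase_of_mem h1, Finset.card_erase_of_mem hpQ]
        have : 2 ≤ Q.card := by
          have := Finset.one_lt_card.2 ⟨p, hpQ, q, hqQ, hpq⟩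
          omega
        omega
      · intro t ht
        rcases Finset.mem_insert.1 ht with rfl | ht'
        · exact hmg_path
        · exact hpaths t (hQ2sub t ht').1
      · intro t ht s hs hts x hxt hxs
        rcases Finset.mem_insert.1 ht with rfl | ht' <;> rcases Finset.mem_insert.1 hs with rfl | hs'
        · exact hts rfl
        · obtain ⟨hsQ, hsp, hsq⟩ := hQ2sub s hs'
          rcases (hmg_mem x).1 hxt with h | h
          · exact hdisj s hsQ p hpQ hsp x hxs h
          · exact hdisj s hsQ q hqQ hsq x hxs h
        · obtain ⟨htQ, htp', htq'⟩ := hQ2sub t ht'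
          rcases (hmg_mem x).1 hxs with h | h
          · exact hdisj t htQ p hpQ htp' x hxt h
          · exact hdisj t htQ q hqQ htq' x hxt h
        · exact hdisj t (hQ2sub t ht').1 s (hQ2sub s hs').1 hts x hxt hxs
      · rw [Finset.sum_insert hmg_notin]
        have e1 : p.length + ∑ t ∈ Q.erase p, t.length = ∑ t ∈ Q, t.length :=
          Finset.add_sum_erase Q _ hpQ
        have h1 : q ∈ Q.erase p := Finset.mem_erase.2 ⟨fun h => hpq h.symm, hqQ⟩
        have e2 : q.length + ∑ t ∈ Q2, t.length = ∑ t ∈ Q.erase p, t.length :=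
          Finset.add_sum_erase _ _ h1
        rw [hmg_len]
        omega
      · intro x
        constructor
        · rintro ⟨t, ht, hxt⟩
          rcases Finset.mem_insert.1 ht with rfl | ht'
          · rcases (hmg_mem x).1 hxt with h | h
            · exact ⟨p, hpQ, h⟩
            · exact ⟨q, hqQ, h⟩
          · exact ⟨t, (hQ2sub t ht').1, hxt⟩
        · rintro ⟨t, ht, hxt⟩
          by_cases htp' : t = p
          · exact ⟨mg, Finset.mem_insert_self _ _, (hmg_mem x).2 (Or.inl (htp' ▸ hxt))⟩
          by_cases htq' : t = q
          · exact ⟨mg, Finset.mem_insert_self _ _, (hmg_mem x).2 (Or.inr (htq' ▸ hxt))⟩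
          · exact ⟨t, Finset.mem_insert_of_mem (Finset.mem_erase.2 ⟨htq',
              Finset.mem_erase.2 ⟨htp', ht⟩⟩), hxt⟩
    -- apply the step in the proper orientation
    have hstep : ∃ R₀ : Finset (List V), R₀.card = Q.card - 1 ∧ (∀ t ∈ R₀, IsPath A t) ∧
        PDisjoint R₀ ∧ (∑ t ∈ R₀, t.length) = (∑ t ∈ Q, t.length) ∧
        (∀ x : V, (∃ t ∈ R₀, x ∈ t) ↔ (∃ t ∈ Q, x ∈ t)) := by
      rcases hDadj with h | h
      · exact step p hpQ q hqQ hpq h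
      · exact step q hqQ p hpQ (Ne.symm hpq) h
    obtain ⟨R₀, hR₀card, hR₀paths, hR₀disj, hR₀sum, hR₀cov⟩ := hstep
    have hQpos : 2 ≤ Q.card := by
      have := Finset.one_lt_card.2 ⟨p, hpQ, q, hqQ, hpq⟩
      omega
    obtain ⟨R, hRcard, hRpaths, hRdisj, hRsum, hRcov, hRstab⟩ :=
      ih R₀ (by omega) hR₀paths hR₀disj
    refine ⟨R, by omega, hRpaths, hRdisj, by rw [hRsum, hR₀sum], ?_, hRstab⟩
    intro x
    rw [hRcov x, hR₀cov x]
end Packs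
section Key
variable (A : V → V → Prop) (S : Finset V) (d : V)

noncomputable def sOf (q : List V) : V :=
  if h : ∃ s, s ∈ S ∧ A (q.getLastD d) s then h.choose else d

noncomputable def sIf (q : List V) : V :=
  if h : ∃ s, s ∈ S ∧ A s (q.getLastD d) then h.choose else d

noncomputable def OutF (Q : Finset (List V)) : Finset (List V) :=
  Q.filter (fun q => ∃ s ∈ S, A (q.getLastD d) s)

noncomputable def BF (Q : Finset (List V)) : Finset (List V) :=
  (Q \ OutF A S d Q).filter (fun q => ∃ p ∈ OutF A S d Q, sOf A S d p = sIf A S d q)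

noncomputable def prtF (Q : Finset (List V)) (q : List V) : List V :=
  if h : ∃ p, p ∈ OutF A S d Q ∧ sOf A S d p = sIf A S d q then h.choose else []

noncomputable def mrgF (Q : Finset (List V)) (q : List V) : List V :=
  if h : ∃ m : List V, m.Nodup ∧ m.Chain' A ∧
      m.length = (prtF A S d Q q).length + q.length + 1 ∧
      (∀ a, a ∈ m ↔ a ∈ prtF A S d Q q ∨ a ∈ q ∨ a = sIf A S d q) then h.choose else []

noncomputable def insF (q : List V) : List V :=
  if h : ∃ m : List V, m.Nodup ∧ m.Chain' A ∧ m.length = q.length + 1 ∧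
      (∀ a, a ∈ m ↔ a ∈ q ∨ a = sIf A S d q) then h.choose else []

noncomputable def gF (Q : Finset (List V)) (q : List V) : List V :=
  if q ∈ OutF A S d Q then q ++ [sOf A S d q]
  else if q ∈ BF A S d Q then mrgF A S d Q q else insF A S d q

noncomputable def svF (Q : Finset (List V)) (q : List V) : V :=
  if q ∈ OutF A S d Q then sOf A S d q else sIf A S d q

variable {A S d}

lemma sOf_spec {q : List V} (h : ∃ s ∈ S, A (q.getLastD d) s) :
    sOf A S d q ∈ S ∧ A (q.getLastD d) (sOf A S d q) := by
  have h' : ∃ s, s ∈ S ∧ A (q.getLastD d) s := by tauto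
  rw [sOf, dif_pos h']
  exact ⟨h'.choose_spec.1, h'.choose_spec.2⟩

lemma sIf_spec {q : List V} (h : ∃ s ∈ S, A s (q.getLastD d)) :
    sIf A S d q ∈ S ∧ A (sIf A S d q) (q.getLastD d) := by
  have h' : ∃ s, s ∈ S ∧ A s (q.getLastD d) := by tauto
  rw [sIf, dif_pos h']
  exact ⟨h'.choose_spec.1, h'.choose_spec.2⟩

lemma mem_OutF {Q : Finset (List V)} {q : List V} :
    q ∈ OutF A S d Q ↔ q ∈ Q ∧ ∃ s ∈ S, A (q.getLastD d) s := by
  rw [OutF, Finset.mem_filter]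

lemma mem_BF {Q : Finset (List V)} {q : List V} :
    q ∈ BF A S d Q ↔ (q ∈ Q ∧ q ∉ OutF A S d Q) ∧
      ∃ p ∈ OutF A S d Q, sOf A S d p = sIf A S d q := by
  rw [BF, Finset.mem_filter, Finset.mem_sdiff]

lemma prtF_spec {Q : Finset (List V)} {q : List V} (h : q ∈ BF A S d Q) :
    prtF A S d Q q ∈ OutF A S d Q ∧ sOf A S d (prtF A S d Q q) = sIf A S d q := by
  obtain ⟨-, p, hp, hps⟩ := mem_BF.1 h
  have h' : ∃ p, p ∈ OutF A S d Q ∧ sOf A S d p = sIf A S d q := ⟨p, hp, hps⟩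
  rw [prtF, dif_pos h']
  exact h'.choose_spec

end Key
section KeyMain
variable {A : V → V → Prop}

/-- The key augmentation lemma: given a maximum stable set `S` with `|S| ≥ k` and a
pack of at most `k` paths avoiding `S` with pairwise nonadjacent terminals, the pack
can be augmented by `k` vertices. -/
lemma key_lemma (hin : InSemicomplete A) (d : V) (k : ℕ)
    (S : Finset V) (hS : DStable A (S : Set V))
    (hmax : ∀ T : Finset V, DStable A (T : Set V) → T.card ≤ S.card)
    (hkS : k ≤ S.card)
    (Q : Finset (List V)) (hQcard : Q.card ≤ k)
    (hQpaths : ∀ p ∈ Q, IsPath A p) (hQdisj : PDisjoint Q)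
    (hQavoid : ∀ p ∈ Q, ∀ x ∈ p, x ∉ S)
    (hQterm : ∀ p ∈ Q, ∀ q ∈ Q, p ≠ q → ¬ DAdj A (p.getLastD d) (q.getLastD d)) :
    ∃ R : Finset (List V), IsKPack A k R ∧ weight R = weight Q + k := by
  classical
  -- basic terminal facts
  have hne : ∀ p ∈ Q, p ≠ [] := fun p hp => (hQpaths p hp).1
  have htm : ∀ p ∈ Q, p.getLastD d ∈ p := fun p hp => getLastD_mem (hne p hp) d
  have htmS : ∀ p ∈ Q, p.getLastD d ∉ S := fun p hp => hQavoid p hp _ (htm p hp)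
  have htinj : ∀ p ∈ Q, ∀ q ∈ Q, p.getLastD d = q.getLastD d → p = q := by
    intro p hp q hq he
    by_contra hne'
    exact hQdisj p hp q hq hne' _ (htm p hp) (he ▸ htm q hq)
  -- domination from maximality
  have hdom : ∀ v, v ∉ S → ∃ s ∈ S, DAdj A v s := by
    intro v hv
    by_contra hcon
    push_neg at hcon
    have hst : DStable A ((insert v S : Finset V) : Set V) := by
      intro a ha b hb hab
      simp only [Finset.coe_insert, Set.mem_insert_iff, Finset.mem_coe] at ha hb
      rcases ha with rfl | ha <;> rcases hb with rfl | hb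
      · exact absurd rfl hab
      · exact hcon b hb
      · intro hadj
        exact hcon a ha (Or.symm hadj)
      · exact hS a ha b hb hab
    have := hmax _ hst
    rw [Finset.card_insert_of_notMem hv] at this
    omega
  -- In paths have a unique in-neighbour in S
  have hIn_ex : ∀ q ∈ Q, q ∉ OutF A S d Q → ∃ s ∈ S, A s (q.getLastD d) := by
    intro q hq hqo
    obtain ⟨s, hs, hadj⟩ := hdom _ (htmS q hq)
    rcases hadj with h | h
    · exact absurd (mem_OutF.2 ⟨hq, s, hs, h⟩) hqo
    · exact ⟨s, hs, h⟩
  have hIuniq : ∀ q ∈ Q, ∀ s ∈ S, A s (q.getLastD d) → s = sIf A S d q := by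
    intro q hq s hs hA
    have hspec := sIf_spec ⟨s, hs, hA⟩
    by_contra hne'
    have : s ≠ q.getLastD d := fun h => (htmS q hq) (h ▸ hs)
    exact hS s hs _ hspec.1 hne' (hin (q.getLastD d) s _ hA hspec.2 hne')
  -- injectivity of sOf on Out
  have hOinj : ∀ p ∈ OutF A S d Q, ∀ q ∈ OutF A S d Q, sOf A S d p = sOf A S d q → p = q := by
    intro p hp q hq he
    obtain ⟨hpQ, hpex⟩ := mem_OutF.1 hp
    obtain ⟨hqQ, hqex⟩ := mem_OutF.1 hq
    have hps := sOf_spec hpex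
    have hqs := sOf_spec hqex
    by_contra hne'
    have htne : p.getLastD d ≠ q.getLastD d := fun h => hne' (htinj p hpQ q hqQ h)
    exact hQterm p hpQ q hqQ hne'
      (hin (sOf A S d p) _ _ hps.2 (he ▸ hqs.2) htne)
  -- injectivity of sIf on In (uses maximality of S)
  have hIinj : ∀ p ∈ Q, p ∉ OutF A S d Q → ∀ q ∈ Q, q ∉ OutF A S d Q →
      sIf A S d p = sIf A S d q → p = q := by
    intro p hpQ hpo q hqQ hqo he
    by_contra hne'
    have hps := sIf_spec (hIn_ex p hpQ hpo)
    have hqs := sIf_spec (hIn_ex q hqQ hqo)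
    set s₀ := sIf A S d p with hs₀
    have htne : p.getLastD d ≠ q.getLastD d := fun h => hne' (htinj p hpQ q hqQ h)
    -- the exchanged set
    set T := insert (p.getLastD d) (insert (q.getLastD d) (S.erase s₀)) with hT
    have hnoadj : ∀ r ∈ Q, r ∉ OutF A S d Q → ∀ s' ∈ S, s' ≠ sIf A S d r →
        ¬ DAdj A (r.getLastD d) s' := by
      intro r hrQ hro s' hs' hsne hadj
      rcases hadj with h | h
      · exact hro (mem_OutF.2 ⟨hrQ, s', hs', h⟩)
      · exact hsne (hIuniq r hrQ s' hs' h)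
    have hTst : DStable A (T : Set V) := by
      intro a ha b hb hab
      simp only [hT, Finset.coe_insert, Set.mem_insert_iff, Finset.mem_coe,
        Finset.mem_erase] at ha hb
      rcases ha with rfl | rfl | ⟨hane, haS⟩ <;> rcases hb with rfl | rfl | ⟨hbne, hbS⟩
      · exact absurd rfl hab
      · exact hQterm p hpQ q hqQ hne'
      · exact hnoadj p hpQ hpo _ hbS (by rw [← hs₀]; exact hbne)
      · intro hadj
        exact hQterm p hpQ q hqQ hne' (Or.symm hadj)
      · exact absurd rfl hab
      · exact hnoadj q hqQ hqo _ hbS (by rw [← he]; exact hbne)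
      · intro hadj
        exact hnoadj p hpQ hpo _ haS (by rw [← hs₀]; exact hane) (Or.symm hadj)
      · intro hadj
        exact hnoadj q hqQ hqo _ haS (by rw [← he]; exact hane) (Or.symm hadj)
      · exact hS a haS b hbS hab
    have hcard := hmax T hTst
    have h1 : q.getLastD d ∉ S.erase s₀ := fun h => (htmS q hqQ) (Finset.mem_of_mem_erase h)
    have h2 : p.getLastD d ∉ insert (q.getLastD d) (S.erase s₀) := by
      intro h
      rcases Finset.mem_insert.1 h with h' | h'
      · exact htne h'
      · exact (htmS p hpQ) (Finset.mem_of_mem_erase h')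
    rw [hT, Finset.card_insert_of_notMem h2, Finset.card_insert_of_notMem h1,
      Finset.card_erase_of_mem (hs₀ ▸ hps.1)] at hcard
    have : 1 ≤ S.card := Finset.card_pos.2 ⟨_, hps.1⟩
    omega
  -- partner basics
  have hprt_inj : ∀ p ∈ BF A S d Q, ∀ q ∈ BF A S d Q,
      prtF A S d Q p = prtF A S d Q q → p = q := by
    intro p hp q hq he
    have hps := prtF_spec hp
    have hqs := prtF_spec hq
    obtain ⟨⟨hpQ, hpo⟩, -⟩ := mem_BF.1 hp
    obtain ⟨⟨hqQ, hqo⟩, -⟩ := mem_BF.1 hq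
    exact hIinj p hpQ hpo q hqQ hqo (by rw [← hps.2, ← hqs.2, he])
  have hBQ : ∀ q ∈ BF A S d Q, q ∈ Q ∧ q ∉ OutF A S d Q := fun q hq => (mem_BF.1 hq).1
  have hOutQ : ∀ q ∈ OutF A S d Q, q ∈ Q := fun q hq => (mem_OutF.1 hq).1
  set πB := (BF A S d Q).image (prtF A S d Q) with hπB
  have hπB_Out : ∀ p ∈ πB, p ∈ OutF A S d Q := by
    intro p hp
    obtain ⟨q, hq, rfl⟩ := Finset.mem_image.1 hp
    exact (prtF_spec hq).1
  have hπB_card : πB.card = (BF A S d Q).card :=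
    Finset.card_image_of_injOn (fun p hp q hq => hprt_inj p hp q hq)
  have hπB_sub : πB ⊆ Q := fun p hp => hOutQ p (hπB_Out p hp)
  have hB_sub : BF A S d Q ⊆ Q \ πB := by
    intro q hq
    rw [Finset.mem_sdiff]
    refine ⟨(hBQ q hq).1, fun hc => ?_⟩
    exact (hBQ q hq).2 (hπB_Out q hc)
  -- spec of the merged path
  have hmrg : ∀ q ∈ BF A S d Q, (mrgF A S d Q q).Nodup ∧ (mrgF A S d Q q).Chain' A ∧
      (mrgF A S d Q q).length = (prtF A S d Q q).length + q.length + 1 ∧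
      (∀ a, a ∈ mrgF A S d Q q ↔ a ∈ prtF A S d Q q ∨ a ∈ q ∨ a = sIf A S d q) := by
    intro q hq
    obtain ⟨⟨hqQ, hqo⟩, -⟩ := mem_BF.1 hq
    obtain ⟨hpO, hpe⟩ := prtF_spec hq
    set p₀ := prtF A S d Q q with hp₀
    obtain ⟨hp₀Q, hp₀ex⟩ := mem_OutF.1 hpO
    have hsOspec := sOf_spec hp₀ex
    have hsIspec := sIf_spec (hIn_ex q hqQ hqo)
    set s₀ := sIf A S d q with hs₀
    have hp₀ne : p₀ ≠ q := by
      intro h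
      exact hqo (h ▸ hpO)
    have hqpath := hQpaths q hqQ
    have hp₀path := hQpaths p₀ hp₀Q
    have hdecq : q.dropLast ++ [q.getLastD d] = q := dropLast_concat_getLastD hqpath.1 d
    have hs₀S : s₀ ∈ S := hsIspec.1
    have hs₀p₀ : s₀ ∉ p₀ := fun h => hQavoid p₀ hp₀Q s₀ h hs₀S
    have hs₀q : s₀ ∉ q := fun h => hQavoid q hqQ s₀ h hs₀S
    have htq_p₀ : q.getLastD d ∉ p₀ := fun h => hQdisj q hqQ p₀ hp₀Q (Ne.symm hp₀ne) _ (htm q hqQ) h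
    have htqs₀ : q.getLastD d ≠ s₀ := fun h => (htmS q hqQ) (h ▸ hs₀S)
    have hc1 : List.Chain' A ((p₀ ++ [s₀]) ++ [q.getLastD d]) := by
      apply chain'_concat_of
      · apply chain'_concat_of hp₀path.2.2
        intro x hx
        rw [getLast?_eq_getLastD hp₀path.1 d, Option.mem_some_iff] at hx
        subst hx
        rw [← hpe]
        exact hsOspec.2
      · intro x hx
        rw [List.getLast?_concat] at hx
        simp only [Option.mem_some_iff] at hx
        subst hx
        exact hsIspec.2
    have hn1 : ((p₀ ++ [s₀]) ++ [q.getLastD d]).Nodup := by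
      refine nodup_concat.2 ⟨nodup_concat.2 ⟨hp₀path.2.1, hs₀p₀⟩, ?_⟩
      intro h
      rcases List.mem_append.1 h with h' | h'
      · exact htq_p₀ h'
      · simp only [List.mem_singleton] at h'
        exact htqs₀ h'
    have hc2 : List.Chain' A (q.dropLast ++ [q.getLastD d]) := by rw [hdecq]; exact hqpath.2.2
    have hn2 : (q.dropLast ++ [q.getLastD d]).Nodup := by rw [hdecq]; exact hqpath.2.1
    have hd12 : ∀ a ∈ p₀ ++ [s₀], a ∉ q.dropLast := by
      intro a ha had
      have haq : a ∈ q := List.dropLast_subset q had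
      rcases List.mem_append.1 ha with h' | h'
      · exact hQdisj p₀ hp₀Q q hqQ hp₀ne a h' haq
      · simp only [List.mem_singleton] at h'
        exact hs₀q (h' ▸ haq)
    obtain ⟨r, hrlen, hrnd, hrch, hrmem⟩ := merge_lemma hin
      ((p₀ ++ [s₀]).length + q.dropLast.length) (p₀ ++ [s₀]) q.dropLast (q.getLastD d)
      (le_refl _) hc1 hc2 hn1 hn2 hd12
    have hex : ∃ m : List V, m.Nodup ∧ m.Chain' A ∧
        m.length = p₀.length + q.length + 1 ∧
        (∀ a, a ∈ m ↔ a ∈ p₀ ∨ a ∈ q ∨ a = s₀) := by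
      refine ⟨r ++ [q.getLastD d], hrnd, hrch, ?_, ?_⟩
      · have hq1 : 1 ≤ q.length := List.length_pos_iff.2 hqpath.1
        have : q.dropLast.length = q.length - 1 := List.length_dropLast
        have h4 : (r ++ [q.getLastD d]).length = r.length + 1 := by simp
        have h5 : (p₀ ++ [s₀]).length = p₀.length + 1 := by simp
        rw [h4, hrlen, h5]
        omega
      · intro a
        simp only [List.mem_append, List.mem_singleton, hrmem]
        constructor
        · rintro (((h | h) | h) | rfl)
          · exact Or.inl h
          · exact Or.inr (Or.inr h)
          · exact Or.inr (Or.inl (List.dropLast_subset q h))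
          · exact Or.inr (Or.inl (htm q hqQ))
        · rintro (h | h | rfl)
          · exact Or.inl (Or.inl (Or.inl h))
          · by_cases hx : a = q.getLastD d
            · exact Or.inr hx
            · refine Or.inl (Or.inr ?_)
              have h2 := List.mem_append.1 (hdecq ▸ h)
              rcases h2 with h' | h'
              · exact h'
              · simp only [List.mem_singleton] at h'
                exact absurd h' hx
          · exact Or.inl (Or.inl (Or.inr rfl))
    rw [mrgF, dif_pos hex]
    exact hex.choose_spec
  -- spec of the inserted path
  have hins : ∀ q ∈ Q, q ∉ OutF A S d Q → (insF A S d q).Nodup ∧ (insF A S d q).Chain' A ∧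
      (insF A S d q).length = q.length + 1 ∧
      (∀ a, a ∈ insF A S d q ↔ a ∈ q ∨ a = sIf A S d q) := by
    intro q hqQ hqo
    have hsIspec := sIf_spec (hIn_ex q hqQ hqo)
    set s₀ := sIf A S d q with hs₀
    have hqpath := hQpaths q hqQ
    have hdecq : q.dropLast ++ [q.getLastD d] = q := dropLast_concat_getLastD hqpath.1 d
    have hs₀S : s₀ ∈ S := hsIspec.1
    have hs₀q : s₀ ∉ q := fun h => hQavoid q hqQ s₀ h hs₀S
    have hc2 : List.Chain' A (q.dropLast ++ [q.getLastD d]) := by rw [hdecq]; exact hqpath.2.2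
    have hn2 : (q.dropLast ++ [q.getLastD d]).Nodup := by rw [hdecq]; exact hqpath.2.1
    obtain ⟨r, hrlen, hrnd, hrch, hrmem⟩ := insert_lemma hin q.dropLast.length q.dropLast
      (q.getLastD d) s₀ (le_refl _) hc2 hn2
      (fun h => hs₀q (List.dropLast_subset q h))
      (fun h => (htmS q hqQ) (h ▸ hs₀S)) hsIspec.2
    have hex : ∃ m : List V, m.Nodup ∧ m.Chain' A ∧ m.length = q.length + 1 ∧
        (∀ a, a ∈ m ↔ a ∈ q ∨ a = s₀) := by
      refine ⟨r ++ [q.getLastD d], hrnd, hrch, ?_, ?_⟩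
      · have hq1 : 1 ≤ q.length := List.length_pos_iff.2 hqpath.1
        have h3 : q.dropLast.length = q.length - 1 := List.length_dropLast
        have h4 : (r ++ [q.getLastD d]).length = r.length + 1 := by simp
        rw [h4, hrlen]
        omega
      · intro a
        simp only [List.mem_append, List.mem_singleton, hrmem]
        constructor
        · rintro ((h | h) | rfl)
          · exact Or.inl (List.dropLast_subset q h)
          · exact Or.inr h
          · exact Or.inl (htm q hqQ)
        · rintro (h | rfl)
          · by_cases hx : a = q.getLastD d
            · exact Or.inr hx
            · refine Or.inl (Or.inl ?_)
              have h2 := List.mem_append.1 (hdecq ▸ h)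
              rcases h2 with h' | h'
              · exact h'
              · simp only [List.mem_singleton] at h'
                exact absurd h' hx
          · exact Or.inl (Or.inr rfl)
    rw [insF, dif_pos hex]
    exact hex.choose_spec
  -- properties of the transform g
  have hg_len : ∀ q ∈ Q, (gF A S d Q q).length =
      q.length + 1 + (if q ∈ BF A S d Q then (prtF A S d Q q).length else 0) := by
    intro q hqQ
    by_cases ho : q ∈ OutF A S d Q
    · have hnB : q ∉ BF A S d Q := fun h => (hBQ q h).2 ho
      rw [gF, if_pos ho, if_neg hnB]
      simp
    · rw [gF, if_neg ho]
      by_cases hb : q ∈ BF A S d Q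
      · rw [if_pos hb, if_pos hb, (hmrg q hb).2.2.1]
        omega
      · rw [if_neg hb, if_neg hb, (hins q hqQ ho).2.2.1]
  have hg_path : ∀ q ∈ Q, IsPath A (gF A S d Q q) := by
    intro q hqQ
    have hql : 1 ≤ q.length := List.length_pos_iff.2 (hne q hqQ)
    have hlen : 1 ≤ (gF A S d Q q).length := by rw [hg_len q hqQ]; omega
    refine ⟨fun h => by rw [h] at hlen; simp at hlen, ?_, ?_⟩
    · by_cases ho : q ∈ OutF A S d Q
      · rw [gF, if_pos ho]
        obtain ⟨-, hex⟩ := mem_OutF.1 ho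
        have hs := sOf_spec hex
        exact nodup_concat.2 ⟨(hQpaths q hqQ).2.1, fun h => hQavoid q hqQ _ h hs.1⟩
      · rw [gF, if_neg ho]
        by_cases hb : q ∈ BF A S d Q
        · rw [if_pos hb]; exact (hmrg q hb).1
        · rw [if_neg hb]; exact (hins q hqQ ho).1
    · by_cases ho : q ∈ OutF A S d Q
      · rw [gF, if_pos ho]
        obtain ⟨-, hex⟩ := mem_OutF.1 ho
        have hs := sOf_spec hex
        apply chain'_concat_of (hQpaths q hqQ).2.2
        intro x hx
        rw [getLast?_eq_getLastD (hne q hqQ) d, Option.mem_some_iff] at hx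
        subst hx
        exact hs.2
      · rw [gF, if_neg ho]
        by_cases hb : q ∈ BF A S d Q
        · rw [if_pos hb]; exact (hmrg q hb).2.1
        · rw [if_neg hb]; exact (hins q hqQ ho).2.1
  have hg_mem : ∀ q ∈ Q, ∀ x ∈ gF A S d Q q,
      x ∈ q ∨ (q ∈ BF A S d Q ∧ x ∈ prtF A S d Q q) ∨ x = svF A S d Q q := by
    intro q hqQ x hx
    by_cases ho : q ∈ OutF A S d Q
    · rw [gF, if_pos ho] at hx
      rw [svF, if_pos ho]
      rcases List.mem_append.1 hx with h | h
      · exact Or.inl h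
      · simp only [List.mem_singleton] at h
        exact Or.inr (Or.inr h)
    · rw [gF, if_neg ho] at hx
      rw [svF, if_neg ho]
      by_cases hb : q ∈ BF A S d Q
      · rw [if_pos hb] at hx
        rcases ((hmrg q hb).2.2.2 x).1 hx with h | h | h
        · exact Or.inr (Or.inl ⟨hb, h⟩)
        · exact Or.inl h
        · exact Or.inr (Or.inr h)
      · rw [if_neg hb] at hx
        rcases ((hins q hqQ ho).2.2.2 x).1 hx with h | h
        · exact Or.inl h
        · exact Or.inr (Or.inr h)
  have hsv_S : ∀ q ∈ Q, svF A S d Q q ∈ S := by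
    intro q hqQ
    by_cases ho : q ∈ OutF A S d Q
    · rw [svF, if_pos ho]; exact (sOf_spec (mem_OutF.1 ho).2).1
    · rw [svF, if_neg ho]; exact (sIf_spec (hIn_ex q hqQ ho)).1
  have hsv_inj : ∀ p ∈ Q \ πB, ∀ q ∈ Q \ πB, svF A S d Q p = svF A S d Q q → p = q := by
    intro p hp q hq he
    obtain ⟨hpQ, hpπ⟩ := Finset.mem_sdiff.1 hp
    obtain ⟨hqQ, hqπ⟩ := Finset.mem_sdiff.1 hq
    by_cases hpo : p ∈ OutF A S d Q <;> by_cases hqo : q ∈ OutF A S d Q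
    · rw [svF, if_pos hpo, svF, if_pos hqo] at he
      exact hOinj p hpo q hqo he
    · rw [svF, if_pos hpo, svF, if_neg hqo] at he
      exfalso
      have hqB : q ∈ BF A S d Q := mem_BF.2 ⟨⟨hqQ, hqo⟩, p, hpo, he⟩
      have := (prtF_spec hqB).2
      have hpp : prtF A S d Q q = p := hOinj _ (prtF_spec hqB).1 p hpo (by rw [this, ← he])
      exact hpπ (hpp ▸ Finset.mem_image_of_mem _ hqB)
    · rw [svF, if_neg hpo, svF, if_pos hqo] at he
      exfalso
      have hpB : p ∈ BF A S d Q := mem_BF.2 ⟨⟨hpQ, hpo⟩, q, hqo, he.symm⟩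
      have := (prtF_spec hpB).2
      have hqp : prtF A S d Q p = q := hOinj _ (prtF_spec hpB).1 q hqo (by rw [this, he])
      exact hqπ (hqp ▸ Finset.mem_image_of_mem _ hpB)
    · rw [svF, if_neg hpo, svF, if_neg hqo] at he
      exact hIinj p hpQ hpo q hqQ hqo he
  -- the leftover paths and the fresh singleton vertices
  set G := Q \ πB with hG
  have hGQ : ∀ q ∈ G, q ∈ Q := fun q hq => (Finset.mem_sdiff.1 hq).1
  have hG_card : G.card = Q.card - (BF A S d Q).card := by
    rw [hG, Finset.card_sdiff_of_subset hπB_sub, hπB_card]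
  have hb_le : (BF A S d Q).card ≤ Q.card := Finset.card_le_card (fun q hq => (hBQ q hq).1)
  set used := G.image (svF A S d Q) with hused
  have hused_card : used.card ≤ G.card := Finset.card_image_le
  have hw : k - G.card ≤ (S \ used).card := by
    have h1 : S.card - used.card ≤ (S \ used).card := Finset.le_card_sdiff _ _
    omega
  obtain ⟨W, hWsub, hWcard⟩ := Finset.exists_subset_card_eq hw
  have hWS : ∀ s ∈ W, s ∈ S ∧ s ∉ used := by
    intro s hs
    have := hWsub hs
    rw [Finset.mem_sdiff] at this
    exact this
  -- master disjointness of transformed paths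
  have hgdisj : ∀ p ∈ G, ∀ q ∈ G, p ≠ q → ∀ x ∈ gF A S d Q p, x ∉ gF A S d Q q := by
    intro p hp q hq hne' x hxp hxq
    have hpQ := hGQ p hp
    have hqQ := hGQ q hq
    have hpπ : p ∉ πB := (Finset.mem_sdiff.1 hp).2
    have hqπ : q ∉ πB := (Finset.mem_sdiff.1 hq).2
    rcases hg_mem p hpQ x hxp with h1 | ⟨hpB, h1⟩ | h1 <;>
      rcases hg_mem q hqQ x hxq with h2 | ⟨hqB, h2⟩ | h2
    · exact hQdisj p hpQ q hqQ hne' x h1 h2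
    · have hprtQ : prtF A S d Q q ∈ Q := hOutQ _ (prtF_spec hqB).1
      have : p ≠ prtF A S d Q q := fun h => hpπ (h ▸ Finset.mem_image_of_mem _ hqB)
      exact hQdisj p hpQ _ hprtQ this x h1 h2
    · exact hQavoid p hpQ x h1 (h2 ▸ hsv_S q hqQ)
    · have hprtQ : prtF A S d Q p ∈ Q := hOutQ _ (prtF_spec hpB).1
      have : prtF A S d Q p ≠ q := fun h => hqπ (h ▸ Finset.mem_image_of_mem _ hpB)
      exact hQdisj _ hprtQ q hqQ this x h1 h2
    · have hprtpQ : prtF A S d Q p ∈ Q := hOutQ _ (prtF_spec hpB).1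
      have hprtqQ : prtF A S d Q q ∈ Q := hOutQ _ (prtF_spec hqB).1
      have : prtF A S d Q p ≠ prtF A S d Q q := fun h => hne' (hprt_inj p hpB q hqB h)
      exact hQdisj _ hprtpQ _ hprtqQ this x h1 h2
    · exact hQavoid _ (hOutQ _ (prtF_spec hpB).1) x h1 (h2 ▸ hsv_S q hqQ)
    · exact hQavoid q hqQ x h2 (h1 ▸ hsv_S p hpQ)
    · exact hQavoid _ (hOutQ _ (prtF_spec hqB).1) x h2 (h1 ▸ hsv_S p hpQ)
    · exact hne' (hsv_inj p hp q hq (by rw [← h1, ← h2]))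
  have hg_ne : ∀ q ∈ Q, gF A S d Q q ≠ [] := fun q hq => (hg_path q hq).1
  have hgInj : ∀ p ∈ G, ∀ q ∈ G, gF A S d Q p = gF A S d Q q → p = q := by
    intro p hp q hq he
    by_contra hne'
    obtain ⟨x, hx⟩ := List.exists_mem_of_ne_nil _ (hg_ne p (hGQ p hp))
    exact hgdisj p hp q hq hne' x hx (he ▸ hx)
  have hg_len2 : ∀ q ∈ Q, 2 ≤ (gF A S d Q q).length := by
    intro q hq
    have := hg_len q hq
    have h1 : 1 ≤ q.length := List.length_pos_iff.2 (hne q hq)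
    omega
  set F := G.image (gF A S d Q) ∪ W.image (fun s => [s]) with hF
  have hUdisj : Disjoint (G.image (gF A S d Q)) (W.image (fun s => [s])) := by
    rw [Finset.disjoint_left]
    intro l h1 h2
    obtain ⟨p, hp, rfl⟩ := Finset.mem_image.1 h1
    obtain ⟨s, hs, heq⟩ := Finset.mem_image.1 h2
    have := hg_len2 p (hGQ p hp)
    rw [← heq] at this
    simp at this
  have hsingle_inj : ∀ s ∈ W, ∀ t ∈ W, ([s] : List V) = [t] → s = t := by
    intro s _ t _ h
    simpa using h
  have hcard_imgG : (G.image (gF A S d Q)).card = G.card :=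
    Finset.card_image_of_injOn (fun p hp q hq => hgInj p hp q hq)
  have hcard_imgW : (W.image (fun s => ([s] : List V))).card = W.card :=
    Finset.card_image_of_injOn (fun s hs t ht => hsingle_inj s hs t ht)
  have hcardF : F.card = G.card + W.card := by
    rw [hF, Finset.card_union_of_disjoint hUdisj, hcard_imgG, hcard_imgW]
  -- F is a k-pack
  have hFpack : IsKPack A k F := by
    refine ⟨?_, ?_, ?_⟩
    · rw [hcardF]; omega
    · intro p hp
      rcases Finset.mem_union.1 hp with h | h
      · obtain ⟨q, hq, rfl⟩ := Finset.mem_image.1 h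
        exact hg_path q (hGQ q hq)
      · obtain ⟨s, hs, rfl⟩ := Finset.mem_image.1 h
        exact ⟨by simp, by simp, List.isChain_singleton _⟩
    · intro p hp q hq hne' x hxp hxq
      rcases Finset.mem_union.1 hp with h1 | h1 <;> rcases Finset.mem_union.1 hq with h2 | h2
      · obtain ⟨p', hp', rfl⟩ := Finset.mem_image.1 h1
        obtain ⟨q', hq', rfl⟩ := Finset.mem_image.1 h2
        have : p' ≠ q' := fun h => hne' (h ▸ rfl)
        exact hgdisj p' hp' q' hq' this x hxp hxq
      · obtain ⟨p', hp', rfl⟩ := Finset.mem_image.1 h1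
        obtain ⟨s, hs, rfl⟩ := Finset.mem_image.1 h2
        simp only [List.mem_singleton] at hxq
        subst hxq
        obtain ⟨hsS, hsu⟩ := hWS x hs
        rcases hg_mem p' (hGQ p' hp') x hxp with h | ⟨hpB, h⟩ | h
        · exact hQavoid p' (hGQ p' hp') x h hsS
        · exact hQavoid _ (hOutQ _ (prtF_spec hpB).1) x h hsS
        · exact hsu (h ▸ Finset.mem_image_of_mem _ hp')
      · obtain ⟨s, hs, rfl⟩ := Finset.mem_image.1 h1
        obtain ⟨q', hq', rfl⟩ := Finset.mem_image.1 h2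
        simp only [List.mem_singleton] at hxp
        subst hxp
        obtain ⟨hsS, hsu⟩ := hWS x hs
        rcases hg_mem q' (hGQ q' hq') x hxq with h | ⟨hqB, h⟩ | h
        · exact hQavoid q' (hGQ q' hq') x h hsS
        · exact hQavoid _ (hOutQ _ (prtF_spec hqB).1) x h hsS
        · exact hsu (h ▸ Finset.mem_image_of_mem _ hq')
      · obtain ⟨s, hs, rfl⟩ := Finset.mem_image.1 h1
        obtain ⟨t, ht, rfl⟩ := Finset.mem_image.1 h2
        simp only [List.mem_singleton] at hxp hxq
        subst hxp
        exact hne' (hxq ▸ rfl)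
  -- weight computation
  have hBG : G.filter (fun q => q ∈ BF A S d Q) = BF A S d Q := by
    apply Finset.ext
    intro q
    rw [Finset.mem_filter]
    constructor
    · rintro ⟨-, h⟩; exact h
    · intro h; exact ⟨hB_sub h, h⟩
  have hsum1 : ∑ q ∈ G, (gF A S d Q q).length =
      (∑ q ∈ G, q.length) + G.card + ∑ q ∈ BF A S d Q, (prtF A S d Q q).length := by
    rw [Finset.sum_congr rfl (fun q hq => hg_len q (hGQ q hq))]
    rw [Finset.sum_add_distrib, Finset.sum_add_distrib]
    rw [← Finset.sum_filter, hBG]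
    simp [mul_comm]
  have hsum2 : ∑ q ∈ BF A S d Q, (prtF A S d Q q).length = ∑ p ∈ πB, p.length := by
    rw [hπB, Finset.sum_image (fun p hp q hq => hprt_inj p hp q hq)]
  have hsum3 : (∑ q ∈ G, q.length) + ∑ p ∈ πB, p.length = ∑ q ∈ Q, q.length := by
    rw [hG]; exact Finset.sum_sdiff hπB_sub
  have hsumW : ∑ l ∈ W.image (fun s => ([s] : List V)), l.length = W.card := by
    rw [Finset.sum_image (fun s hs t ht => hsingle_inj s hs t ht)]
    simp
  have hweight : weight F = weight Q + k := by
    rw [weight, hF, Finset.sum_union hUdisj, weight]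
    rw [Finset.sum_image (fun p hp q hq => hgInj p hp q hq), hsum1, hsumW]
    omega
  exact ⟨F, hFpack, hweight⟩
end KeyMain
section Glue
variable {A : V → V → Prop}

lemma empty_kpack (A : V → V → Prop) (k : ℕ) : IsKPack A k ∅ := by
  refine ⟨by simp, by simp, ?_⟩
  intro p hp
  simp at hp

lemma weight_bdd (k : ℕ) :
    BddAbove {n | ∃ P : Finset (List V), IsKPack A k P ∧ weight P = n} := by
  refine ⟨k * Fintype.card V, ?_⟩
  rintro n ⟨P, hP, rfl⟩
  have h1 : ∀ p ∈ P, p.length ≤ Fintype.card V :=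
    fun p hp => ((hP.2.1 p hp).2.1).length_le_card
  calc weight P ≤ P.card * Fintype.card V := by
        rw [weight]
        simpa using Finset.sum_le_card_nsmul P _ _ h1
    _ ≤ k * Fintype.card V := Nat.mul_le_mul_right _ hP.1

lemma lamk_attained (A : V → V → Prop) (k : ℕ) :
    ∃ P : Finset (List V), IsKPack A k P ∧ weight P = lamk A k := by
  have h := Nat.sSup_mem (s := {n | ∃ P : Finset (List V), IsKPack A k P ∧ weight P = n})
    ⟨0, ∅, empty_kpack A k, by simp [weight]⟩ (weight_bdd k)
  exact h

lemma le_lamk {k : ℕ} {P : Finset (List V)} (hP : IsKPack A k P) : weight P ≤ lamk A k :=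
  le_csSup (weight_bdd k) ⟨P, hP, rfl⟩

lemma coloring_singletons (A : V → V → Prop) {k : ℕ} (hk : 0 < k) :
    ∃ C : Finset (Finset V), IsColoring A C ∧ cnorm k C = Fintype.card V := by
  refine ⟨Finset.univ.image (fun v => ({v} : Finset V)), ⟨?_, ?_, ?_, ?_⟩, ?_⟩
  · intro c hc
    obtain ⟨v, -, rfl⟩ := Finset.mem_image.1 hc
    intro a ha b hb hab
    simp only [Finset.coe_singleton, Set.mem_singleton_iff] at ha hb
    exact absurd (ha.trans hb.symm) hab
  · intro c hc
    obtain ⟨v, -, rfl⟩ := Finset.mem_image.1 hc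
    exact ⟨v, by simp⟩
  · intro c hc c' hc' hne
    obtain ⟨v, -, rfl⟩ := Finset.mem_image.1 hc
    obtain ⟨w, -, rfl⟩ := Finset.mem_image.1 hc'
    have : v ≠ w := fun h => hne (h ▸ rfl)
    simp [Finset.disjoint_left, this]
  · intro v
    exact ⟨{v}, Finset.mem_image.2 ⟨v, Finset.mem_univ v, rfl⟩, by simp⟩
  · rw [cnorm, Finset.sum_image (by intro x _ y _ h; simpa using h)]
    simp only [Finset.card_singleton]
    rw [Finset.sum_congr rfl (fun x _ => min_eq_left hk)]
    simp

lemma chik_attained (A : V → V → Prop) {k : ℕ} (hk : 0 < k) :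
    ∃ C : Finset (Finset V), IsColoring A C ∧ cnorm k C = chik A k := by
  obtain ⟨C, hC, hcn⟩ := coloring_singletons A hk
  have h := Nat.sInf_mem (s := {n | ∃ C : Finset (Finset V), IsColoring A C ∧ cnorm k C = n})
    ⟨Fintype.card V, C, hC, hcn⟩
  exact h

lemma chik_le {k : ℕ} {C : Finset (Finset V)} (hC : IsColoring A C) :
    chik A k ≤ cnorm k C :=
  Nat.sInf_le ⟨C, hC, rfl⟩

/-- Lifting a coloring of the complement of a stable set. -/
lemma coloring_lift {k : ℕ} (S : Finset V) (hS : DStable A (S : Set V)) (hSne : S.Nonempty)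
    (C' : Finset (Finset {v : V // v ∉ S}))
    (hC' : IsColoring (fun a b => A a.1 b.1) C') :
    ∃ C : Finset (Finset V), IsColoring A C ∧ cnorm k C = min S.card k + cnorm k C' := by
  classical
  obtain ⟨hst, hne, hdisj, hcov⟩ := hC'
  set f : Finset {v : V // v ∉ S} → Finset V := Finset.image Subtype.val with hf
  have hfinj : Function.Injective f := Finset.image_injective Subtype.val_injective
  have hfS : ∀ c' ∈ C', ∀ x ∈ f c', x ∉ S := by
    intro c' hc' x hx
    obtain ⟨y, -, rfl⟩ := Finset.mem_image.1 hx
    exact y.2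
  have hSnotmem : S ∉ C'.image f := by
    intro h
    obtain ⟨c', hc', he⟩ := Finset.mem_image.1 h
    obtain ⟨s, hs⟩ := hSne
    exact hfS c' hc' s (he ▸ hs) hs
  refine ⟨insert S (C'.image f), ⟨?_, ?_, ?_, ?_⟩, ?_⟩
  · intro c hc
    rcases Finset.mem_insert.1 hc with rfl | hc'
    · exact hS
    · obtain ⟨c', hcc, rfl⟩ := Finset.mem_image.1 hc'
      intro a ha b hb hab
      simp only [hf, Finset.coe_image, Set.mem_image, Finset.mem_coe] at ha hb
      obtain ⟨a', ha', rfl⟩ := ha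
      obtain ⟨b', hb', rfl⟩ := hb
      have : a' ≠ b' := fun h => hab (h ▸ rfl)
      exact hst c' hcc a' ha' b' hb' this
  · intro c hc
    rcases Finset.mem_insert.1 hc with rfl | hc'
    · exact hSne
    · obtain ⟨c', hcc, rfl⟩ := Finset.mem_image.1 hc'
      obtain ⟨x, hx⟩ := hne c' hcc
      exact ⟨x.1, Finset.mem_image_of_mem _ hx⟩
  · intro c hc c₂ hc₂ hne'
    rcases Finset.mem_insert.1 hc with rfl | hc' <;> rcases Finset.mem_insert.1 hc₂ with rfl | hc₂'
    · exact absurd rfl hne'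
    · obtain ⟨c₂', hcc, rfl⟩ := Finset.mem_image.1 hc₂'
      rw [Finset.disjoint_left]
      intro a ha hac
      exact hfS c₂' hcc a hac ha
    · obtain ⟨c', hcc, rfl⟩ := Finset.mem_image.1 hc'
      rw [Finset.disjoint_left]
      intro a ha hac
      exact hfS c' hcc a ha hac
    · obtain ⟨c', hcc, rfl⟩ := Finset.mem_image.1 hc'
      obtain ⟨c₂', hcc₂, rfl⟩ := Finset.mem_image.1 hc₂'
      have : c' ≠ c₂' := fun h => hne' (h ▸ rfl)
      exact (Finset.disjoint_image Subtype.val_injective).2 (hdisj c' hcc c₂' hcc₂ this)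
  · intro v
    by_cases hv : v ∈ S
    · exact ⟨S, Finset.mem_insert_self _ _, hv⟩
    · obtain ⟨c', hc', hvc⟩ := hcov ⟨v, hv⟩
      exact ⟨f c', Finset.mem_insert_of_mem (Finset.mem_image_of_mem _ hc'),
        Finset.mem_image_of_mem _ hvc⟩
  · rw [cnorm, Finset.sum_insert hSnotmem,
      Finset.sum_image (fun x _ y _ h => hfinj h), cnorm]
    congr 1
    apply Finset.sum_congr rfl
    intro c' _
    rw [hf, Finset.card_image_of_injOn (fun x _ y _ h => Subtype.val_injective h)]

end Glue
section Main

lemma main_induction : ∀ (N : ℕ), ∀ (V : Type u_1) (instF : Fintype V) (instD : DecidableEq V)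
    (A : V → V → Prop), Fintype.card V = N → Irreflexive A → InSemicomplete A →
    ∀ k : ℕ, 0 < k → chik A k ≤ lamk A k := by
  intro N
  induction N using Nat.strong_induction_on with
  | _ N ih =>
  intro V instF instD A hcardV hirr hin k hk
  obtain ⟨P, hPpack, hPw⟩ := lamk_attained A k
  by_cases hcov : ∀ v : V, ∃ p ∈ P, v ∈ p
  · -- the maximum pack covers everything
    have hwcard : weight P = Fintype.card V := by
      have h1 : ∀ p ∈ P, ∀ q ∈ P, p ≠ q → Disjoint p.toFinset q.toFinset := by
        intro p hp q hq hne
        rw [Finset.disjoint_left]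
        intro a ha hb
        exact hPpack.2.2 p hp q hq hne a (List.mem_toFinset.1 ha) (List.mem_toFinset.1 hb)
      have h2 : P.biUnion List.toFinset = Finset.univ := by
        apply Finset.eq_univ_of_forall
        intro v
        obtain ⟨p, hp, hvp⟩ := hcov v
        exact Finset.mem_biUnion.2 ⟨p, hp, List.mem_toFinset.2 hvp⟩
      calc weight P = ∑ p ∈ P, p.toFinset.card :=
            Finset.sum_congr rfl
              (fun p hp => (List.toFinset_card_of_nodup ((hPpack.2.1 p hp).2.1)).symm)
        _ = (P.biUnion List.toFinset).card := (Finset.card_biUnion h1).symm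
        _ = Fintype.card V := by rw [h2, Finset.card_univ]
    obtain ⟨C, hC, hCn⟩ := coloring_singletons A hk
    calc chik A k ≤ cnorm k C := chik_le hC
      _ = Fintype.card V := hCn
      _ = lamk A k := by rw [← hPw, hwcard]
  · push_neg at hcov
    obtain ⟨u, hu⟩ := hcov
    obtain ⟨P₁, hP₁card, hP₁paths, hP₁disj, hP₁sum, hP₁cov, hP₁stab⟩ :=
      stabilize hin u P.card P (le_refl _) hPpack.2.1 hPpack.2.2
    have hP₁w : weight P₁ = lamk A k := by
      rw [weight] at hPw ⊢
      rw [hP₁sum, hPw]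
    have hu₁ : ∀ p ∈ P₁, u ∉ p := by
      intro p hp hup
      obtain ⟨q, hq, huq⟩ := (hP₁cov u).1 ⟨p, hp, hup⟩
      exact hu q hq huq
    have hP₁pack : IsKPack A k P₁ := ⟨le_trans hP₁card hPpack.1, hP₁paths, hP₁disj⟩
    have hcardP₁ : P₁.card = k := by
      by_contra hc
      have hlt : P₁.card < k := lt_of_le_of_ne hP₁pack.1 hc
      have hnotmem : ([u] : List V) ∉ P₁ := fun h => hu₁ _ h (by simp)
      have hpack2 : IsKPack A k (insert [u] P₁) := by
        refine ⟨?_, ?_, ?_⟩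
        · rw [Finset.card_insert_of_notMem hnotmem]; omega
        · intro p hp
          rcases Finset.mem_insert.1 hp with rfl | hp'
          · exact ⟨by simp, by simp, List.isChain_singleton _⟩
          · exact hP₁paths p hp'
        · intro p hp q hq hne x hxp hxq
          rcases Finset.mem_insert.1 hp with rfl | hp' <;>
            rcases Finset.mem_insert.1 hq with rfl | hq'
          · exact hne rfl
          · simp only [List.mem_singleton] at hxp
            subst hxp
            exact hu₁ q hq' hxq
          · simp only [List.mem_singleton] at hxq
            subst hxq
            exact hu₁ p hp' hxp
          · exact hP₁disj p hp' q hq' hne x hxp hxq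
      have hle := le_lamk hpack2
      rw [weight, Finset.sum_insert hnotmem] at hle
      have h2 : ∑ p ∈ P₁, p.length = lamk A k := by rw [← hP₁w, weight]
      simp only [List.length_singleton] at hle
      omega
    have htermInj : ∀ p ∈ P₁, ∀ q ∈ P₁, p.getLastD u = q.getLastD u → p = q := by
      intro p hp q hq he
      by_contra hne'
      exact hP₁disj p hp q hq hne' _ (getLastD_mem (hP₁paths p hp).1 u)
        (he ▸ getLastD_mem (hP₁paths q hq).1 u)
    set T₀ := P₁.image (fun p => p.getLastD u) with hT₀
    have hT₀card : T₀.card = k := by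
      rw [hT₀, Finset.card_image_of_injOn (fun p hp q hq => htermInj p hp q hq), hcardP₁]
    have hT₀st : DStable A (T₀ : Set V) := by
      intro a ha b hb hab
      simp only [hT₀, Finset.coe_image, Set.mem_image, Finset.mem_coe] at ha hb
      obtain ⟨p, hp, rfl⟩ := ha
      obtain ⟨q, hq, rfl⟩ := hb
      have : p ≠ q := fun h => hab (h ▸ rfl)
      exact hP₁stab p hp q hq this
    have hbddS : BddAbove {n | ∃ T : Finset V, DStable A (T : Set V) ∧ T.card = n} := by
      refine ⟨Fintype.card V, ?_⟩
      rintro n ⟨T, -, rfl⟩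
      exact Finset.card_le_univ T
    obtain ⟨S, hSst, hScard⟩ :=
      Nat.sSup_mem (s := {n | ∃ T : Finset V, DStable A (T : Set V) ∧ T.card = n})
        ⟨0, ∅, by intro a ha; simp at ha, by simp⟩ hbddS
    have hmax : ∀ T : Finset V, DStable A (T : Set V) → T.card ≤ S.card := by
      intro T hT
      rw [hScard]
      exact le_csSup hbddS ⟨T, hT, rfl⟩
    have hkS : k ≤ S.card := by
      rw [hScard, ← hT₀card]
      exact le_csSup hbddS ⟨T₀, hT₀st, rfl⟩
    have hSne : S.Nonempty := Finset.card_pos.1 (by omega)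
    have hin' : InSemicomplete (fun a b : {v : V // v ∉ S} => A a.1 b.1) := by
      intro v a b h1 h2 hne
      have : a.1 ≠ b.1 := fun h => hne (Subtype.ext h)
      exact hin v.1 a.1 b.1 h1 h2 this
    have hirr' : Irreflexive (fun a b : {v : V // v ∉ S} => A a.1 b.1) := fun a => hirr a.1
    obtain ⟨s₀, hs₀⟩ := hSne
    have hcard' : Fintype.card {v : V // v ∉ S} < N := by
      rw [← hcardV]
      exact Fintype.card_subtype_lt (x := s₀) (by simp [hs₀])
    have hrec := ih _ hcard' {v : V // v ∉ S} (inferInstance) (inferInstance) (fun a b => A a.1 b.1) rfl hirr' hin' k hk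
    have hdown : ∀ n ∈ {n | ∃ P' : Finset (List {v : V // v ∉ S}),
        IsKPack (fun a b => A a.1 b.1) k P' ∧ weight P' = n}, n + k ≤ lamk A k := by
      rintro n ⟨P', hP'pack, hP'w⟩
      set Q₀ := P'.image (List.map (Subtype.val : {v : V // v ∉ S} → V)) with hQ₀
      have hmapinj : Function.Injective (List.map (Subtype.val : {v : V // v ∉ S} → V)) :=
        List.map_injective_iff.2 Subtype.val_injective
      have hQ₀card : Q₀.card ≤ k := by
        rw [hQ₀, Finset.card_image_of_injective _ hmapinj]
        exact hP'pack.1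
      have hQ₀paths : ∀ p ∈ Q₀, IsPath A p := by
        intro p hp
        obtain ⟨p', hp', rfl⟩ := Finset.mem_image.1 hp
        obtain ⟨h1, h2, h3⟩ := hP'pack.2.1 p' hp'
        refine ⟨?_, h2.map Subtype.val_injective, (List.isChain_map _).2 h3⟩
        intro h
        apply h1
        have hl := congrArg List.length h
        simp only [List.length_map, List.length_nil] at hl
        exact List.length_eq_zero_iff.1 hl
      have hQ₀disj : PDisjoint Q₀ := by
        intro p hp q hq hne x hxp hxq
        obtain ⟨p', hp', rfl⟩ := Finset.mem_image.1 hp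
        obtain ⟨q', hq', rfl⟩ := Finset.mem_image.1 hq
        have hne' : p' ≠ q' := fun h => hne (h ▸ rfl)
        obtain ⟨x', hx', rfl⟩ := List.mem_map.1 hxp
        obtain ⟨y, hy, he⟩ := List.mem_map.1 hxq
        have hyx : y = x' := Subtype.val_injective he
        exact hP'pack.2.2 p' hp' q' hq' hne' x' hx' (hyx ▸ hy)
      have hQ₀avoid : ∀ p ∈ Q₀, ∀ x ∈ p, x ∉ S := by
        intro p hp x hx
        obtain ⟨p', hp', rfl⟩ := Finset.mem_image.1 hp
        obtain ⟨x', hx', rfl⟩ := List.mem_map.1 hx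
        exact x'.2
      have hQ₀w : ∑ p ∈ Q₀, p.length = n := by
        rw [hQ₀, Finset.sum_image (fun p hp q hq h => hmapinj h)]
        rw [← hP'w, weight]
        apply Finset.sum_congr rfl
        intro p _
        exact List.length_map _
      obtain ⟨Q₁, hQ₁card, hQ₁paths, hQ₁disj, hQ₁sum, hQ₁cov, hQ₁stab⟩ :=
        stabilize hin u Q₀.card Q₀ (le_refl _) hQ₀paths hQ₀disj
      have hQ₁avoid : ∀ p ∈ Q₁, ∀ x ∈ p, x ∉ S := by
        intro p hp x hx
        obtain ⟨q, hq, hxq⟩ := (hQ₁cov x).1 ⟨p, hp, hx⟩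
        exact hQ₀avoid q hq x hxq
      have hQ₁cardk : Q₁.card ≤ k := le_trans hQ₁card hQ₀card
      obtain ⟨R, hRpack, hRw⟩ := key_lemma hin u k S hSst hmax hkS Q₁ hQ₁cardk
        hQ₁paths hQ₁disj hQ₁avoid hQ₁stab
      have hle := le_lamk hRpack
      rw [hRw] at hle
      have : weight Q₁ = n := by rw [weight, hQ₁sum, hQ₀w]
      omega
    have hlam' : lamk (fun a b : {v : V // v ∉ S} => A a.1 b.1) k ≤ lamk A k - k := by
      have h0 : {n : ℕ | ∃ P' : Finset (List {v : V // v ∉ S}),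
          IsKPack (fun a b => A a.1 b.1) k P' ∧ weight P' = n}.Nonempty :=
        ⟨0, ∅, empty_kpack _ k, by simp [weight]⟩
      refine csSup_le h0 ?_
      intro n hn
      have := hdown n hn
      omega
    obtain ⟨C', hC', hC'n⟩ := chik_attained (fun a b : {v : V // v ∉ S} => A a.1 b.1) hk
    obtain ⟨C, hC, hCn⟩ := coloring_lift (k := k) S hSst ⟨s₀, hs₀⟩ C' hC'
    have hklam : k ≤ lamk A k := by
      have h1 : ∑ p ∈ P₁, (1:ℕ) ≤ ∑ p ∈ P₁, p.length :=
        Finset.sum_le_sum (fun p hp => List.length_pos_iff.2 (hP₁paths p hp).1)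
      simp only [Finset.sum_const, smul_eq_mul, mul_one] at h1
      rw [← hP₁w, weight]
      omega
    have hchik' : cnorm k C' = chik (fun a b : {v : V // v ∉ S} => A a.1 b.1) k := hC'n
    calc chik A k ≤ cnorm k C := chik_le hC
      _ = min S.card k + cnorm k C' := hCn
      _ = k + cnorm k C' := by rw [min_eq_right hkS]
      _ ≤ lamk A k := by
          rw [hchik']
          omega
end Main

/-- The dual Linial Conjecture for in-semicomplete digraphs: χ_k(D) ≤ λ_k(D). -/
theorem stmt19 (A : V → V → Prop) (hirr : Irreflexive A)
    (hin : InSemicomplete A) (k : ℕ) (hk : 0 < k) :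
    chik A k ≤ lamk A k := by
  exact main_induction (Fintype.card V) V inferInstance inferInstance A rfl hirr hin k hk

end DigraphPaper
end
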